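/- arXiv:2511.16129 — 4 statements merged into one kernel-verified Lean document; each statement's English description precedes it below -/
import Mathlib

section
/- Let N = 1 and m > 1, and assume (H1). Then the equation admits at most one radial solution: if u₁ is a radial solution on [0,R₁) and u₂ is a radial solution on [0,R₂), then R₁ = R₂ and u₁ = u₂. Moreover, for any radial solution u, the value α = u(0) is the unique number in (b,∞) with F(α) = 0. -/
open Filter Set MeasureTheory intervalIntegral

noncomputable section

/-- The half-open interval `[0, R)` inside `ℝ`, where `R : EReal` may be `∞`. -/
def domR (R : EReal) : Set ℝ := {r : ℝ | 0 ≤ r ∧ (r : EReal) < R}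

/-- The filter describing `r → R⁻` inside `ℝ` (it equals `atTop` when `R = ∞`). -/
def limR (R : EReal) : Filter ℝ := Filter.comap Real.toEReal (nhdsWithin R (Set.Iio R))

/-- Assumption (H1): `f` is continuous on `(0,∞)`, nonpositive on `(0,b]` and
positive on `(b,∞)`, with `b > 0`. -/
def H1cond (b : ℝ) (f : ℝ → ℝ) : Prop :=
  0 < b ∧ ContinuousOn f (Set.Ioi 0) ∧
    (∀ u : ℝ, 0 < u → u ≤ b → f u ≤ 0) ∧ (∀ u : ℝ, b < u → 0 < f u)

/-- `u` (with derivative `u'`) is a radial solution on `[0, R)` of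
`(r^{N-1} |u'|^{m-2} u')' = - r^{N-1} f(u)`, positive, `C¹` up to the origin,
with `u'(0) = 0` and `u, u' → 0` as `r → R`. -/
def IsRadialSolution (N : ℕ) (m : ℝ) (f : ℝ → ℝ) (R : EReal) (u u' : ℝ → ℝ) : Prop :=
  0 < R ∧
  (∀ r ∈ domR R, HasDerivWithinAt u (u' r) (domR R) r) ∧
  ContinuousOn u' (domR R) ∧
  (∀ r ∈ domR R, 0 < u r) ∧
  u' 0 = 0 ∧
  (∀ r : ℝ, 0 < r → (r : EReal) < R →
    HasDerivAt (fun s : ℝ => s ^ (N - 1) * |u' s| ^ (m - 2) * u' s)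
      (-(r ^ (N - 1) * f (u r))) r) ∧
  Filter.Tendsto u (limR R) (nhds 0) ∧
  Filter.Tendsto u' (limR R) (nhds 0)

/-- `rr` is the (strictly decreasing) inverse on `(0, α)` of a radial solution `u`,
with derivatives `rr'`, `rr''`, satisfying the transformed ODE
`(m-1) r'' = (N-1) r'²/r + f(u) |r'|^m r'`. -/
def IsInvSol (N : ℕ) (m α : ℝ) (f : ℝ → ℝ) (R : EReal) (u rr rr' rr'' : ℝ → ℝ) : Prop :=
  (∀ v ∈ Set.Ioo 0 α,
    0 < rr v ∧ (rr v : EReal) < R ∧ u (rr v) = v ∧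
    HasDerivAt rr (rr' v) v ∧ rr' v < 0 ∧ HasDerivAt rr' (rr'' v) v ∧
    (m - 1) * rr'' v = ((N : ℝ) - 1) * (rr' v) ^ 2 / rr v + f v * |rr' v| ^ m * rr' v) ∧
  (∀ x : ℝ, 0 < x → (x : EReal) < R → ∃ v ∈ Set.Ioo 0 α, rr v = x)

/-- The function `ω(u) = r(u)^{N-1} / (r'(u) |r'(u)|^{m-2})`. -/
def omegaF (N : ℕ) (m : ℝ) (rr rr' : ℝ → ℝ) (v : ℝ) : ℝ :=
  rr v ^ (N - 1) / (rr' v * |rr' v| ^ (m - 2))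

/-- The function `P(u) = a u ω(u) + r(u)^N ((m-1)/m · 1/|r'(u)|^m + (a/N) u f(u))`. -/
def PF (N : ℕ) (m a : ℝ) (f rr rr' : ℝ → ℝ) (v : ℝ) : ℝ :=
  a * v * omegaF N m rr rr' v +
    rr v ^ N * ((m - 1) / m * (1 / |rr' v| ^ m) + a / (N : ℝ) * v * f v)


lemma mem_domR {R : EReal} {r : ℝ} : r ∈ domR R ↔ 0 ≤ r ∧ (r : EReal) < R := Iff.rfl

lemma zero_mem_domR {R : EReal} (hR : 0 < R) : (0:ℝ) ∈ domR R :=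
  ⟨le_refl _, by simpa using hR⟩

lemma Icc_subset_domR {R : EReal} {r : ℝ} (hr : r ∈ domR R) : Icc (0:ℝ) r ⊆ domR R :=
  fun s hs => ⟨hs.1, lt_of_le_of_lt (by exact_mod_cast hs.2) hr.2⟩

lemma domR_mem_nhds {R : EReal} {r : ℝ} (h0 : 0 < r) (hR : (r : EReal) < R) :
    domR R ∈ nhds r := by
  obtain ⟨t, hrt, htR⟩ := EReal.exists_between_coe_real hR
  have hsub : Ioo 0 t ⊆ domR R := fun s hs =>
    ⟨le_of_lt hs.1, lt_trans (by exact_mod_cast hs.2) htR⟩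
  exact Filter.mem_of_superset (Ioo_mem_nhds h0 (by exact_mod_cast hrt)) hsub

lemma eventually_limR {R : EReal} {c : ℝ} (hc : (c : EReal) < R) :
    ∀ᶠ r in limR R, c < r ∧ (r : EReal) < R := by
  have h1 : Ioi (c : EReal) ∩ Iio R ∈ nhdsWithin R (Iio R) :=
    Filter.inter_mem (mem_nhdsWithin_of_mem_nhds (isOpen_Ioi.mem_nhds hc)) self_mem_nhdsWithin
  have h2 := Filter.preimage_mem_comap (m := Real.toEReal) h1
  refine Filter.mem_of_superset h2 ?_
  rintro r ⟨hr1, hr2⟩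
  exact ⟨by { have := hr1; simp only [Set.mem_Ioi] at this; exact_mod_cast this }, hr2⟩

lemma limR_neBot {R : EReal} (hR : 0 < R) : (limR R).NeBot := by
  refine Filter.comap_neBot (fun s hs => ?_)
  rw [mem_nhdsLT_iff_exists_Ioo_subset' (show (0:EReal) < R from hR)] at hs
  obtain ⟨l, hl, hsub⟩ := hs
  obtain ⟨y, hy1, hy2⟩ := EReal.exists_between_coe_real hl
  exact ⟨y, hsub ⟨hy1, hy2⟩⟩

lemma limR_coe (ρ : ℝ) : limR (ρ : EReal) = nhdsWithin ρ (Iio ρ) := by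
  unfold limR
  rw [nhdsWithin, Filter.comap_inf, Filter.comap_principal,
    ← EReal.isEmbedding_coe.nhds_eq_comap, nhdsWithin]
  congr 1
  congr 1
  ext x
  simp [EReal.coe_lt_coe_iff]

section Calc
variable {m : ℝ} (hm : 1 < m)
include hm

omit hm in
lemma hdAbsRpow {p : ℝ} (hp : 1 < p) (y : ℝ) :
    HasDerivAt (fun t : ℝ => |t| ^ p) (p * |y| ^ (p - 2) * y) y := by
  rcases lt_trichotomy y 0 with hy | hy | hy
  · have h1 : HasDerivAt (fun t : ℝ => (-t) ^ p) (p * (-y) ^ (p - 1) * (-1)) y := by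
      exact (Real.hasDerivAt_rpow_const (Or.inl (by linarith : -y ≠ 0))).comp y (hasDerivAt_neg y)
    have h2 : (fun t : ℝ => |t| ^ p) =ᶠ[nhds y] (fun t : ℝ => (-t) ^ p) := by
      filter_upwards [Iio_mem_nhds hy] with t ht
      rw [abs_of_neg ht]
    have h3 : p * (-y) ^ (p - 1) * (-1) = p * |y| ^ (p - 2) * y := by
      rw [abs_of_neg hy]
      rw [show p - 1 = (p - 2) + 1 by ring, Real.rpow_add (by linarith) , Real.rpow_one]
      ring
    exact h3 ▸ h1.congr_of_eventuallyEq h2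
  · subst hy
    have h0 : p * |(0:ℝ)| ^ (p - 2) * 0 = 0 := by ring
    rw [h0]
    rw [hasDerivAt_iff_tendsto_slope]
    have hb : Tendsto (fun t : ℝ => |t| ^ (p - 1)) (nhdsWithin 0 {(0:ℝ)}ᶜ) (nhds 0) := by
      have : ContinuousAt (fun t : ℝ => |t| ^ (p - 1)) 0 := by
        exact (continuous_abs.continuousAt).rpow_const (Or.inr (by linarith))
      have h00 : |(0:ℝ)| ^ (p - 1) = 0 := by
        rw [abs_zero, Real.zero_rpow (by linarith)]
      have hb := this.continuousWithinAt (s := {(0:ℝ)}ᶜ)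
      rw [ContinuousWithinAt, h00] at hb
      exact hb
    refine squeeze_zero_norm (fun t => ?_) hb
    rcases eq_or_ne t 0 with rfl | ht
    · rw [slope_same]
      simp [Real.zero_rpow (show p - 1 ≠ 0 by linarith)]
    · have : slope (fun t : ℝ => |t| ^ p) 0 t = |t| ^ p / t := by
        simp [slope, Real.zero_rpow (by linarith : p ≠ 0), div_eq_inv_mul]
      rw [this, Real.norm_eq_abs, abs_div, abs_of_nonneg (Real.rpow_nonneg (abs_nonneg t) p)]
      rw [Real.rpow_sub (abs_pos.2 ht), Real.rpow_one]
  · have h1 : HasDerivAt (fun t : ℝ => t ^ p) (p * y ^ (p - 1)) y :=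
      Real.hasDerivAt_rpow_const (Or.inl (ne_of_gt hy))
    have h2 : (fun t : ℝ => |t| ^ p) =ᶠ[nhds y] (fun t : ℝ => t ^ p) := by
      filter_upwards [Ioi_mem_nhds hy] with t ht
      rw [abs_of_pos ht]
    have h3 : p * y ^ (p - 1) = p * |y| ^ (p - 2) * y := by
      rw [abs_of_pos hy, show p - 1 = (p - 2) + 1 by ring, Real.rpow_add hy, Real.rpow_one]
      ring
    exact h3 ▸ h1.congr_of_eventuallyEq h2

/-- `φ(x) = |x|^{m-2} x`. -/
def phiF (m x : ℝ) : ℝ := |x| ^ (m - 2) * x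

/-- `ψ(y) = |y|^{p-2} y` with `p = m/(m-1)`: the inverse of `φ`. -/
def psiF (m y : ℝ) : ℝ := |y| ^ (m / (m - 1) - 2) * y

/-- `G(y) = (m-1)/m |y|^{m/(m-1)}`. -/
def GF (m y : ℝ) : ℝ := (m - 1) / m * |y| ^ (m / (m - 1))

lemma one_lt_p : 1 < m / (m - 1) := by
  rw [lt_div_iff₀ (by linarith)]; linarith

lemma hasDerivAt_GF (y : ℝ) : HasDerivAt (GF m) (psiF m y) y := by
  have h := (hdAbsRpow (one_lt_p hm) y).const_mul ((m - 1) / m)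
  have hm0 : m ≠ 0 := by linarith
  have hm1 : m - 1 ≠ 0 := by linarith
  have hc : (m - 1) / m * (m / (m - 1)) = 1 := by field_simp
  have : (m - 1) / m * (m / (m - 1) * |y| ^ (m / (m - 1) - 2) * y) = psiF m y := by
    rw [psiF, show (m - 1) / m * (m / (m - 1) * |y| ^ (m / (m - 1) - 2) * y)
      = ((m - 1) / m * (m / (m - 1))) * (|y| ^ (m / (m - 1) - 2) * y) by ring, hc, one_mul]
  exact this ▸ h

lemma abs_phiF (x : ℝ) : |phiF m x| = |x| ^ (m - 1) := by
  rcases eq_or_ne x 0 with rfl | hx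
  · simp [phiF, Real.zero_rpow (by linarith : m - 1 ≠ 0)]
  · rw [phiF, abs_mul, abs_of_nonneg (Real.rpow_nonneg (abs_nonneg x) _),
      show m - 1 = (m - 2) + 1 by ring, Real.rpow_add (abs_pos.2 hx), Real.rpow_one]

lemma GF_phiF (x : ℝ) : GF m (phiF m x) = (m - 1) / m * |x| ^ m := by
  have hm0 : m ≠ 0 := by linarith
  have hm1 : m - 1 ≠ 0 := by linarith
  rw [GF, abs_phiF hm, ← Real.rpow_mul (abs_nonneg x)]
  congr 2
  field_simp

lemma psiF_phiF (x : ℝ) : psiF m (phiF m x) = x := by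
  rcases eq_or_ne x 0 with rfl | hx
  · simp [phiF, psiF]
  · rw [psiF, abs_phiF hm, ← Real.rpow_mul (abs_nonneg x), phiF, ← mul_assoc,
      ← Real.rpow_add (abs_pos.2 hx)]
    have hm1 : m - 1 ≠ 0 := by linarith
    have : (m - 1) * (m / (m - 1) - 2) + (m - 2) = 0 := by
      field_simp
      ring
    rw [this, Real.rpow_zero, one_mul]

omit hm in
lemma phiF_pos {x : ℝ} (hx : 0 < x) : 0 < phiF m x :=
  mul_pos (Real.rpow_pos_of_pos (abs_pos.2 (ne_of_gt hx)) _) hx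

omit hm in
lemma phiF_neg {x : ℝ} (hx : x < 0) : phiF m x < 0 :=
  mul_neg_of_pos_of_neg (Real.rpow_pos_of_pos (abs_pos.2 (ne_of_lt hx)) _) hx

end Calc

/-- `Φ(v) = ∫_b^v f`. -/
def PhiI (b : ℝ) (f : ℝ → ℝ) (v : ℝ) : ℝ := ∫ τ in b..v, f τ

section H1facts
variable {b : ℝ} {f : ℝ → ℝ} (hf : H1cond b f)
include hf

lemma f_intInt {x y : ℝ} (hx : 0 < x) (hy : 0 < y) : IntervalIntegrable f volume x y := by
  refine (hf.2.1.mono (fun t ht => ?_)).intervalIntegrable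
  exact lt_of_lt_of_le (lt_min hx hy) ht.1

lemma PhiI_hasDerivAt {v : ℝ} (hv : 0 < v) : HasDerivAt (PhiI b f) (f v) v := by
  refine intervalIntegral.integral_hasDerivAt_right (f_intInt hf hf.1 hv) ?_ ?_
  · exact hf.2.1.stronglyMeasurableAtFilter isOpen_Ioi v hv
  · exact hf.2.1.continuousAt (Ioi_mem_nhds hv)

lemma PhiI_anti {x y : ℝ} (hx : 0 < x) (hxy : x ≤ y) (hyb : y ≤ b) :
    PhiI b f y ≤ PhiI b f x := by
  have hy : 0 < y := lt_of_lt_of_le hx hxy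
  have hsub : PhiI b f y - PhiI b f x = ∫ τ in x..y, f τ :=
    intervalIntegral.integral_interval_sub_left (f_intInt hf hf.1 hy) (f_intInt hf hf.1 hx)
  have hle : (∫ τ in x..y, f τ) ≤ 0 := by
    rw [← neg_nonneg, ← intervalIntegral.integral_neg]
    refine intervalIntegral.integral_nonneg hxy (fun t ht => ?_)
    simp only [Pi.neg_apply, neg_nonneg]
    exact hf.2.2.1 t (lt_of_lt_of_le hx ht.1) (le_trans ht.2 hyb)
  linarith

lemma PhiI_strictMono {x y : ℝ} (hbx : b ≤ x) (hxy : x < y) :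
    PhiI b f x < PhiI b f y := by
  have hb := hf.1
  have hx : 0 < x := lt_of_lt_of_le hb hbx
  have hy : 0 < y := lt_trans hx hxy
  have hsub : PhiI b f y - PhiI b f x = ∫ τ in x..y, f τ :=
    intervalIntegral.integral_interval_sub_left (f_intInt hf hf.1 hy) (f_intInt hf hf.1 hx)
  have hpos : 0 < ∫ τ in x..y, f τ := by
    refine intervalIntegral.intervalIntegral_pos_of_pos_on (f_intInt hf hx hy) (fun t ht => ?_) hxy
    exact hf.2.2.2 t (lt_of_le_of_lt hbx ht.1)
  linarith

lemma PhiI_continuousAt {v : ℝ} (hv : 0 < v) : ContinuousAt (PhiI b f) v :=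
  (PhiI_hasDerivAt hf hv).continuousAt

end H1facts

section Sol
variable {m b : ℝ} {f : ℝ → ℝ} {R : EReal} {u u' : ℝ → ℝ}
variable (hm : 1 < m) (hf : H1cond b f) (hsol : IsRadialSolution 1 m f R u u')

include hsol

lemma sol_cont : ContinuousOn u (domR R) :=
  fun r hr => ((hsol.2.1 r hr).continuousWithinAt)

lemma sol_pos : ∀ r ∈ domR R, 0 < u r := hsol.2.2.2.1

lemma sol_hasDerivAt {r : ℝ} (h0 : 0 < r) (hR : (r : EReal) < R) :
    HasDerivAt u (u' r) r :=
  (hsol.2.1 r ⟨le_of_lt h0, hR⟩).hasDerivAt (domR_mem_nhds h0 hR)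

lemma sol_w_deriv {r : ℝ} (h0 : 0 < r) (hR : (r : EReal) < R) :
    HasDerivAt (fun s => phiF m (u' s)) (-(f (u r))) r := by
  have h := hsol.2.2.2.2.2.1 r h0 hR
  simp only [show (1 - 1 : ℕ) = 0 from rfl, pow_zero, one_mul] at h
  exact h

include hm hf

lemma sol_energy : ∀ r ∈ domR R,
    (m - 1) / m * |u' r| ^ m + PhiI b f (u r) = PhiI b f (u 0) := by
  set E : ℝ → ℝ := fun r => (m - 1) / m * |u' r| ^ m + PhiI b f (u r) with hE
  have hm0 : m ≠ 0 := by linarith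
  have hE0 : E 0 = PhiI b f (u 0) := by
    simp [hE, hsol.2.2.2.2.1, Real.zero_rpow hm0]
  have hEderiv : ∀ x : ℝ, 0 < x → (x : EReal) < R → HasDerivAt E 0 x := by
    intro x hx hxR
    have hu : HasDerivAt u (u' x) x := sol_hasDerivAt hsol hx hxR
    have hw : HasDerivAt (fun s => phiF m (u' s)) (-(f (u x))) x := sol_w_deriv hsol hx hxR
    have hG : HasDerivAt (GF m) (psiF m (phiF m (u' x))) (phiF m (u' x)) := hasDerivAt_GF hm _
    have hGw : HasDerivAt (fun s => GF m (phiF m (u' s)))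
        (psiF m (phiF m (u' x)) * (-(f (u x)))) x := by
      have := hG.comp x hw; exact this
    rw [psiF_phiF hm] at hGw
    have hfun : (fun s => GF m (phiF m (u' s))) = fun s => (m - 1) / m * |u' s| ^ m := by
      funext s; exact GF_phiF hm _
    rw [hfun] at hGw
    have hux : 0 < u x := sol_pos hsol x ⟨le_of_lt hx, hxR⟩
    have hP : HasDerivAt (PhiI b f) (f (u x)) (u x) := PhiI_hasDerivAt hf hux
    have hPu : HasDerivAt (fun s => PhiI b f (u s)) (f (u x) * u' x) x := hP.comp x hu
    have := hGw.add hPu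
    rw [show (0:ℝ) = u' x * -f (u x) + f (u x) * u' x by ring]
    exact this
  have hEcont : ContinuousOn E (domR R) := by
    refine ContinuousOn.add ?_ ?_
    · exact (continuousOn_const.mul ((hsol.2.2.1.abs).rpow_const
        (fun x _ => Or.inr (by linarith))))
    · exact ContinuousOn.comp (t := Ioi 0)
        (fun v hv => (PhiI_continuousAt hf hv).continuousWithinAt) (sol_cont hsol)
        (fun r hr => sol_pos hsol r hr)
  intro r hr
  rcases eq_or_lt_of_le hr.1 with h0 | h0
  · rw [← h0]
    exact hE0
  · have hconst : ∀ ε ∈ Ioo (0:ℝ) r, E r = E ε := by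
      intro ε hε
      have hIcc : Icc ε r ⊆ domR R := fun s hs =>
        ⟨le_trans (le_of_lt hε.1) hs.1, lt_of_le_of_lt (EReal.coe_le_coe_iff.2 hs.2) hr.2⟩
      have := constant_of_has_deriv_right_zero (f := E) (hEcont.mono hIcc)
        (fun x hx => (hEderiv x (lt_of_lt_of_le hε.1 hx.1)
          (lt_of_le_of_lt (EReal.coe_le_coe_iff.2 (le_of_lt hx.2)) hr.2)).hasDerivWithinAt)
      exact this r (right_mem_Icc.2 (le_of_lt hε.2))
    have htd : Filter.Tendsto E (nhdsWithin 0 (Ioi 0)) (nhds (E 0)) := by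
      have h1 : ContinuousWithinAt E (Ioo 0 r) 0 :=
        (hEcont 0 (zero_mem_domR hsol.1)).mono
          (fun s hs => ⟨le_of_lt hs.1, lt_of_le_of_lt (EReal.coe_le_coe_iff.2 (le_of_lt hs.2)) hr.2⟩)
      rw [ContinuousWithinAt, nhdsWithin_Ioo_eq_nhdsGT h0] at h1
      exact h1
    have htd2 : Filter.Tendsto (fun _ : ℝ => E r) (nhdsWithin 0 (Ioi 0)) (nhds (E 0)) := by
      refine htd.congr' ?_
      filter_upwards [Ioo_mem_nhdsGT h0] with ε hε
      exact (hconst ε hε).symm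
    have := tendsto_nhds_unique htd2 tendsto_const_nhds
    rw [← hE0, this]

lemma sol_tendsto_Phi : Filter.Tendsto (fun r => PhiI b f (u r)) (limR R)
    (nhds (PhiI b f (u 0))) := by
  have hm0 : m ≠ 0 := by linarith
  have hev : ∀ᶠ r : ℝ in limR R, 0 < r ∧ (r : EReal) < R := by
    have := eventually_limR (R := R) (c := 0) (by exact_mod_cast hsol.1)
    exact this
  have hcm : ContinuousAt (fun t : ℝ => PhiI b f (u 0) - (m - 1) / m * |t| ^ m) 0 := by
    refine ContinuousAt.sub continuousAt_const (ContinuousAt.mul continuousAt_const ?_)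
    exact (continuous_abs.continuousAt).rpow_const (Or.inr (by linarith))
  have htd : Filter.Tendsto (fun r => PhiI b f (u 0) - (m - 1) / m * |u' r| ^ m) (limR R)
      (nhds (PhiI b f (u 0))) := by
    have := hcm.tendsto.comp hsol.2.2.2.2.2.2.2
    simpa [Real.zero_rpow hm0, Function.comp_def] using this
  refine htd.congr' ?_
  filter_upwards [hev] with r hr
  have := sol_energy hm hf hsol r ⟨le_of_lt hr.1, hr.2⟩
  linarith

omit hm hf in
lemma sol_not_flat {γ : ℝ} (hγ : 0 < γ)
    (hflat : ∀ r ∈ domR R, u r < γ → u' r = 0) : False := by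
  have hNB : (limR R).NeBot := limR_neBot hsol.1
  have hev : ∀ᶠ r : ℝ in limR R, 0 < r ∧ (r : EReal) < R := by
    exact eventually_limR (R := R) (c := 0) (by exact_mod_cast hsol.1)
  have hev2 : ∀ᶠ r in limR R, u r < γ := (hsol.2.2.2.2.2.2.1).eventually_lt_const hγ
  obtain ⟨r₁, ⟨hr₁0, hr₁R⟩, hur₁⟩ := (hev.and hev2).exists
  have hr₁dom : r₁ ∈ domR R := ⟨le_of_lt hr₁0, hr₁R⟩
  set c := u r₁ with hc
  have hcpos : 0 < c := sol_pos hsol r₁ hr₁dom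
  -- main claim
  have hmain : ∀ t : ℝ, r₁ ≤ t → (t : EReal) < R → u t = c := by
    intro t hrt htR
    rcases eq_or_lt_of_le hrt with rfl | hrt
    · rfl
    have hdomt : ∀ x : ℝ, r₁ ≤ x → x ≤ t → x ∈ domR R := fun x hx1 hx2 =>
      ⟨le_trans (le_of_lt hr₁0) hx1, lt_of_le_of_lt (EReal.coe_le_coe_iff.2 hx2) htR⟩
    set A := {s : ℝ | s ∈ Icc r₁ t ∧ ∀ x ∈ Icc r₁ s, u x < γ} with hA
    have hA₁ : r₁ ∈ A := by
      refine ⟨⟨le_refl _, le_of_lt hrt⟩, fun x hx => ?_⟩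
      have : x = r₁ := le_antisymm hx.2 hx.1
      rw [this]; exact hur₁
    have hbdd : BddAbove A := ⟨t, fun s hs => hs.1.2⟩
    set T := sSup A with hT
    have hT1 : r₁ ≤ T := le_csSup hbdd hA₁
    have hT2 : T ≤ t := csSup_le ⟨r₁, hA₁⟩ (fun s hs => hs.1.2)
    have key1 : ∀ x ∈ Ico r₁ T, u x < γ := by
      intro x hx
      obtain ⟨s, hsA, hxs⟩ := exists_lt_of_lt_csSup ⟨r₁, hA₁⟩ hx.2
      exact hsA.2 x ⟨hx.1, le_of_lt hxs⟩
    -- derivative zero on [r₁, T)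
    have hder0 : ∀ y : ℝ, r₁ ≤ y → y < t → u y < γ → HasDerivWithinAt u 0 (Ici y) y := by
      intro y hy1 hy2 hy3
      have hydom : y ∈ domR R := hdomt y hy1 (le_of_lt hy2)
      have h0 : u' y = 0 := hflat y hydom hy3
      have := (hsol.2.1 y hydom)
      rw [h0] at this
      refine this.mono_of_mem_nhdsWithin ?_
      refine Filter.mem_of_superset (inter_mem_nhdsWithin (Ici y) (Iio_mem_nhds hy2)) ?_
      rintro s ⟨hs1, hs2⟩
      exact hdomt s (le_trans hy1 hs1) (le_of_lt hs2)
    have hconst : ∀ x ∈ Ico r₁ T, u x = c := by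
      intro x hx
      have hxt : x < t := lt_of_lt_of_le hx.2 hT2
      have hsub : Icc r₁ x ⊆ domR R := fun s hs => hdomt s hs.1 (le_trans hs.2 (le_of_lt hxt))
      have := constant_of_has_deriv_right_zero (f := u) ((sol_cont hsol).mono hsub)
        (fun y hy => hder0 y hy.1 (lt_of_lt_of_le hy.2 (le_of_lt hxt))
          (key1 y ⟨hy.1, lt_of_lt_of_le hy.2 (le_of_lt hx.2)⟩))
      exact this x (right_mem_Icc.2 hx.1)
    have key3 : u T = c := by
      rcases eq_or_lt_of_le hT1 with heq | hT1'
      · rw [← heq]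
      have hcw : ContinuousWithinAt u (Ioo r₁ T) T :=
        ((sol_cont hsol) T (hdomt T (le_of_lt hT1') hT2)).mono
          (fun s hs => hdomt s (le_of_lt hs.1) (le_trans (le_of_lt hs.2) hT2))
      rw [ContinuousWithinAt, nhdsWithin_Ioo_eq_nhdsLT hT1'] at hcw
      have hconst' : Filter.Tendsto u (nhdsWithin T (Iio T)) (nhds c) := by
        refine Filter.Tendsto.congr' ?_ (tendsto_const_nhds (α := ℝ))
        filter_upwards [Ioo_mem_nhdsLT hT1'] with s hs
        exact (hconst s ⟨le_of_lt hs.1, hs.2⟩).symm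
      exact tendsto_nhds_unique hcw hconst'
    have key4 : T = t := by
      by_contra hTt
      have hTt' : T < t := lt_of_le_of_ne hT2 hTt
      have hTdom : T ∈ domR R := hdomt T hT1 hT2
      have hless : u T < γ := key3 ▸ hur₁
      have hmem : {x : ℝ | u x < γ} ∈ nhdsWithin T (domR R) :=
        (sol_cont hsol T hTdom) (Iio_mem_nhds hless)
      rw [Metric.mem_nhdsWithin_iff] at hmem
      obtain ⟨ε, hε, hball⟩ := hmem
      set s := min t (T + ε / 2) with hs
      have hTs : T < s := lt_min hTt' (by linarith)
      have hst : s ≤ t := min_le_left _ _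
      have hsA : s ∈ A := by
        refine ⟨⟨le_trans hT1 (le_of_lt hTs), hst⟩, fun x hx => ?_⟩
        rcases lt_or_ge x T with hxT | hxT
        · exact key1 x ⟨hx.1, hxT⟩
        rcases eq_or_lt_of_le hxT with rfl | hxT'
        · exact hless
        · refine hball ⟨?_, hdomt x hx.1 (le_trans hx.2 hst)⟩
          rw [Metric.mem_ball, Real.dist_eq, abs_sub_lt_iff]
          constructor
          · have : x ≤ T + ε / 2 := le_trans hx.2 (min_le_right _ _)
            linarith
          · linarith
      have : s ≤ T := le_csSup hbdd hsA
      linarith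
    rw [← key4]
    exact key3
  -- contradiction with u → 0
  have hev3 : ∀ᶠ r in limR R, u r = c := by
    filter_upwards [eventually_limR (R := R) (c := r₁) hr₁R] with r hr
    exact hmain r (le_of_lt hr.1) hr.2
  have : Filter.Tendsto u (limR R) (nhds c) :=
    Filter.Tendsto.congr' (by filter_upwards [hev3] with r hr; exact hr.symm) tendsto_const_nhds
  have := tendsto_nhds_unique this hsol.2.2.2.2.2.2.1
  exact absurd this (ne_of_gt hcpos)

lemma sol_b_lt : b < u 0 := by
  by_contra hle
  push_neg at hle
  have h0dom : (0:ℝ) ∈ domR R := zero_mem_domR hsol.1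
  have hα : 0 < u 0 := sol_pos hsol 0 h0dom
  refine sol_not_flat hsol hα (fun r hr hur => ?_)
  have hen := sol_energy hm hf hsol r hr
  have hur0 : 0 < u r := sol_pos hsol r hr
  have hle2 : PhiI b f (u 0) ≤ PhiI b f (u r) :=
    PhiI_anti hf hur0 (le_of_lt hur) hle
  have h2 : 0 ≤ |u' r| ^ m := Real.rpow_nonneg (abs_nonneg _) m
  have hcpos : (0:ℝ) < (m - 1) / m := div_pos (by linarith) (by linarith)
  have h3 : |u' r| ^ m = 0 := by nlinarith
  have h4 : |u' r| = 0 := by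
    rw [Real.rpow_eq_zero (abs_nonneg _) (by linarith : m ≠ 0)] at h3
    exact h3
  exact abs_eq_zero.1 h4

lemma sol_abs_u' : ∀ r ∈ domR R,
    (m - 1) / m * |u' r| ^ m = PhiI b f (u 0) - PhiI b f (u r) := by
  intro r hr
  have := sol_energy hm hf hsol r hr
  linarith

lemma sol_u'_eq_zero {r : ℝ} (hr : r ∈ domR R)
    (hΦ : PhiI b f (u r) = PhiI b f (u 0)) : u' r = 0 := by
  have h := sol_abs_u' hm hf hsol r hr
  rw [hΦ, sub_self] at h
  have hcpos : (0:ℝ) < (m - 1) / m := div_pos (by linarith) (by linarith)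
  have h3 : |u' r| ^ m = 0 := by
    rcases mul_eq_zero.1 h with h' | h'
    · exact absurd h' (ne_of_gt hcpos)
    · exact h'
  have h4 : |u' r| = 0 := by
    rw [Real.rpow_eq_zero (abs_nonneg _) (by linarith : m ≠ 0)] at h3
    exact h3
  exact abs_eq_zero.1 h4

lemma sol_exists_small {γ : ℝ} (hγ : 0 < γ) :
    ∃ r ∈ domR R, 0 < r ∧ u r < γ ∧
      PhiI b f (u 0) - γ < PhiI b f (u r) := by
  have hNB : (limR R).NeBot := limR_neBot hsol.1
  have hev : ∀ᶠ r : ℝ in limR R, 0 < r ∧ (r : EReal) < R :=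
    eventually_limR (R := R) (c := 0) (by exact_mod_cast hsol.1)
  have hev2 : ∀ᶠ r in limR R, u r < γ := (hsol.2.2.2.2.2.2.1).eventually_lt_const hγ
  have hev3 : ∀ᶠ r in limR R, PhiI b f (u 0) - γ < PhiI b f (u r) :=
    (sol_tendsto_Phi hm hf hsol).eventually_const_lt (by linarith)
  obtain ⟨r, ⟨⟨h1, h2⟩, h3⟩, h4⟩ := ((hev.and hev2).and hev3).exists
  exact ⟨r, ⟨le_of_lt h1, h2⟩, h1, h3, h4⟩

lemma sol_Phi_le {v : ℝ} (hv : 0 < v) (hvb : v ≤ b) :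
    PhiI b f v ≤ PhiI b f (u 0) := by
  obtain ⟨r, hrdom, _, hur, _⟩ := sol_exists_small hm hf hsol (lt_min hv hv)
  have hurpos : 0 < u r := sol_pos hsol r hrdom
  have h1 : PhiI b f v ≤ PhiI b f (u r) :=
    PhiI_anti hf hurpos (le_of_lt (lt_of_lt_of_le hur (min_le_left _ _))) hvb
  have h2 := sol_abs_u' hm hf hsol r hrdom
  have h3 : 0 ≤ |u' r| ^ m := Real.rpow_nonneg (abs_nonneg _) m
  have hcpos : (0:ℝ) < (m - 1) / m := div_pos (by linarith) (by linarith)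
  nlinarith

lemma sol_Phi_lt {v : ℝ} (hv : 0 < v) (hvα : v < u 0) :
    PhiI b f v < PhiI b f (u 0) := by
  rcases lt_or_ge b v with hbv | hvb
  · exact PhiI_strictMono hf (le_of_lt hbv) hvα
  have hle := sol_Phi_le hm hf hsol hv hvb
  rcases eq_or_lt_of_le hle with heq | hlt
  · exfalso
    refine sol_not_flat hsol hv (fun r hr hur => ?_)
    have hurpos : 0 < u r := sol_pos hsol r hr
    refine sol_u'_eq_zero hm hf hsol hr (le_antisymm ?_ ?_)
    · exact sol_Phi_le hm hf hsol hurpos (le_trans (le_of_lt hur) hvb)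
    · rw [← heq]
      exact PhiI_anti hf hurpos (le_of_lt hur) hvb
  · exact hlt

lemma sol_tendsto_Phi_zero :
    Filter.Tendsto (PhiI b f) (nhdsWithin 0 (Ioi 0)) (nhds (PhiI b f (u 0))) := by
  rw [Metric.tendsto_nhdsWithin_nhds]
  intro ε hε
  obtain ⟨r, hrdom, hr0, hur, hΦr⟩ :=
    sol_exists_small hm hf hsol (lt_min hf.1 (half_pos hε))
  have hurpos : 0 < u r := sol_pos hsol r hrdom
  refine ⟨u r, hurpos, fun {v} hv hdist => ?_⟩
  have hveq : |v| < u r := by rwa [Real.dist_eq, sub_zero] at hdist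
  have hv0 : 0 < v := hv
  have hvur : v < u r := lt_of_abs_lt hveq
  have hurb : u r ≤ b := le_of_lt (lt_of_lt_of_le hur (min_le_left _ _))
  have h1 : PhiI b f (u r) ≤ PhiI b f v :=
    PhiI_anti hf hv0 (le_of_lt hvur) hurb
  have h2 : PhiI b f v ≤ PhiI b f (u 0) :=
    sol_Phi_le hm hf hsol hv0 (le_trans (le_of_lt hvur) hurb)
  have h3 : PhiI b f (u 0) - ε / 2 < PhiI b f (u r) := by
    have := min_le_right (b) (ε / 2)
    linarith
  rw [Real.dist_eq]
  rw [abs_sub_lt_iff]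
  constructor <;> linarith

lemma sol_integrableOn : IntegrableOn f (Ioc 0 b) volume := by
  have hb := hf.1
  set a : ℕ → ℝ := fun n => b / (n + 1) with ha
  have hapos : ∀ n, 0 < a n := fun n => div_pos hb (by positivity)
  have haleb : ∀ n, a n ≤ b := fun n => by
    rw [ha, div_le_iff₀ (by positivity : (0:ℝ) < (n:ℝ) + 1)]
    nlinarith [Nat.cast_nonneg (α := ℝ) n]
  have hatend : Filter.Tendsto a Filter.atTop (nhds 0) := by
    have := tendsto_one_div_add_atTop_nhds_zero_nat.const_mul b
    simpa [ha, mul_one_div, mul_zero, div_eq_mul_inv] using this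
  have hfi : ∀ n : ℕ, IntegrableOn f (Ioc (a n) b) volume := fun n =>
    (f_intInt hf (hapos n) hb).1
  refine integrableOn_Ioc_of_intervalIntegral_norm_bounded
    (I := PhiI b f (u 0)) (b := fun _ : ℕ => b) hfi hatend tendsto_const_nhds ?_
  refine Filter.Eventually.of_forall (fun n => ?_)
  have hnorm : ∀ x ∈ Ioc (a n) b, ‖f x‖ = -f x := by
    intro x hx
    rw [Real.norm_eq_abs, abs_of_nonpos (hf.2.2.1 x (lt_trans (hapos n) hx.1) hx.2)]
  rw [setIntegral_congr_fun measurableSet_Ioc hnorm]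
  have heq : ∫ x in Ioc (a n) b, -f x = -(∫ x in (a n)..b, f x) := by
    rw [MeasureTheory.integral_neg, intervalIntegral.integral_of_le (haleb n)]
  rw [heq]
  have h2 : PhiI b f (a n) = -∫ x in (a n)..b, f x := by
    rw [PhiI, ← intervalIntegral.integral_symm]
  rw [← h2]
  exact sol_Phi_le hm hf hsol (hapos n) (haleb n)

lemma sol_intInt_zero {x : ℝ} (hx : 0 ≤ x) : IntervalIntegrable f volume 0 x := by
  have hb := hf.1
  rcases le_or_gt x b with hxb | hbx
  · rw [intervalIntegrable_iff, uIoc_of_le hx]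
    exact (sol_integrableOn hm hf hsol).mono_set (Ioc_subset_Ioc_right hxb)
  · have h1 : IntervalIntegrable f volume 0 b := by
      rw [intervalIntegrable_iff, uIoc_of_le (le_of_lt hb)]
      exact sol_integrableOn hm hf hsol
    exact h1.trans (f_intInt hf hb (lt_trans hb hbx))

lemma sol_int_zero_b : (∫ τ in (0:ℝ)..b, f τ) = -PhiI b f (u 0) := by
  have hb := hf.1
  set a : ℕ → ℝ := fun n => b / (n + 1) with ha
  have hapos : ∀ n, 0 < a n := fun n => div_pos hb (by positivity)
  have haleb : ∀ n, a n ≤ b := fun n => by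
    rw [ha, div_le_iff₀ (by positivity : (0:ℝ) < (n:ℝ) + 1)]
    nlinarith [Nat.cast_nonneg (α := ℝ) n]
  have hatend : Filter.Tendsto a Filter.atTop (nhds 0) := by
    have := tendsto_one_div_add_atTop_nhds_zero_nat.const_mul b
    simpa [ha, mul_one_div, mul_zero, div_eq_mul_inv] using this
  have hmono : Monotone (fun n : ℕ => Ioc (a n) b) := by
    intro i j hij
    refine Ioc_subset_Ioc_left ?_
    rw [ha]
    apply div_le_div_of_nonneg_left (le_of_lt hb) (by positivity)
    exact_mod_cast by exact_mod_cast add_le_add_left (Nat.cast_le.2 hij) 1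
  have hunion : (⋃ n : ℕ, Ioc (a n) b) = Ioc 0 b := by
    ext x
    simp only [mem_iUnion, mem_Ioc]
    constructor
    · rintro ⟨n, h1, h2⟩
      exact ⟨lt_trans (hapos n) h1, h2⟩
    · rintro ⟨h1, h2⟩
      obtain ⟨n, hn⟩ := exists_nat_gt (b / x)
      refine ⟨n, ?_, h2⟩
      rw [ha, div_lt_iff₀ (by positivity : (0:ℝ) < (n:ℝ) + 1)]
      rw [div_lt_iff₀ h1] at hn
      nlinarith
  have htend := tendsto_setIntegral_of_monotone (s := fun n : ℕ => Ioc (a n) b)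
    (fun n => measurableSet_Ioc) hmono (hunion ▸ sol_integrableOn hm hf hsol)
  rw [hunion] at htend
  -- the other limit
  have heq : ∀ n, (∫ x in Ioc (a n) b, f x) = -PhiI b f (a n) := by
    intro n
    rw [← intervalIntegral.integral_of_le (haleb n), PhiI, ← intervalIntegral.integral_symm]
  have htend2 : Filter.Tendsto (fun n => ∫ x in Ioc (a n) b, f x) Filter.atTop
      (nhds (-PhiI b f (u 0))) := by
    have hcomp : Filter.Tendsto a Filter.atTop (nhdsWithin 0 (Ioi 0)) := by
      rw [tendsto_nhdsWithin_iff]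
      exact ⟨hatend, Filter.Eventually.of_forall (fun n => hapos n)⟩
    have := (sol_tendsto_Phi_zero hm hf hsol).comp hcomp
    have := this.neg
    refine Filter.Tendsto.congr (fun n => (heq n).symm) this
  have := tendsto_nhds_unique htend htend2
  rw [intervalIntegral.integral_of_le (le_of_lt hb), this]

lemma sol_F_zero : (∫ τ in (0:ℝ)..(u 0), f τ) = 0 := by
  have hb := hf.1
  have hα : 0 < u 0 := sol_pos hsol 0 (zero_mem_domR hsol.1)
  have h1 : IntervalIntegrable f volume 0 b := by
    rw [intervalIntegrable_iff, uIoc_of_le (le_of_lt hb)]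
    exact sol_integrableOn hm hf hsol
  have h2 : IntervalIntegrable f volume b (u 0) := f_intInt hf hb hα
  have hadd := intervalIntegral.integral_add_adjacent_intervals h1 h2
  rw [← hadd, sol_int_zero_b hm hf hsol]
  have : (∫ τ in b..(u 0), f τ) = PhiI b f (u 0) := rfl
  rw [this]
  ring

lemma sol_u_le : ∀ r ∈ domR R, u r ≤ u 0 := by
  intro r hr
  by_contra h
  push_neg at h
  have hb := sol_b_lt hm hf hsol
  have hstrict : PhiI b f (u 0) < PhiI b f (u r) :=
    PhiI_strictMono hf (le_of_lt hb) h
  have h1 := sol_abs_u' hm hf hsol r hr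
  have h3 : 0 ≤ |u' r| ^ m := Real.rpow_nonneg (abs_nonneg _) m
  have hcpos : (0:ℝ) < (m - 1) / m := div_pos (by linarith) (by linarith)
  nlinarith

lemma sol_u'_nonpos : ∀ r ∈ domR R, u' r ≤ 0 := by
  intro rp hrp
  by_contra hpos
  push_neg at hpos
  have hrp0 : 0 < rp := by
    rcases eq_or_lt_of_le hrp.1 with heq | h
    · exfalso; rw [← heq] at hpos; rw [hsol.2.2.2.2.1] at hpos; exact lt_irrefl 0 hpos
    · exact h
  have hsubdom : Icc 0 rp ⊆ domR R := Icc_subset_domR hrp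
  set S := {r : ℝ | r ∈ Icc 0 rp ∧ u' r ≤ 0} with hS
  have hS0 : (0:ℝ) ∈ S := ⟨⟨le_refl _, le_of_lt hrp0⟩, le_of_eq hsol.2.2.2.2.1⟩
  have hSclosed : IsClosed S :=
    ContinuousOn.preimage_isClosed_of_isClosed (hsol.2.2.1.mono hsubdom)
      isClosed_Icc isClosed_Iic
  have hSbdd : BddAbove S := ⟨rp, fun s hs => hs.1.2⟩
  set r₂ := sSup S with hr₂
  have hr₂S : r₂ ∈ S := hSclosed.csSup_mem ⟨0, hS0⟩ hSbdd
  have hr₂le : r₂ ≤ rp := hr₂S.1.2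
  have hr₂lt : r₂ < rp := by
    rcases eq_or_lt_of_le hr₂le with heq | h
    · exfalso; rw [heq] at hr₂S; linarith [hr₂S.2]
    · exact h
  have hgt : ∀ s ∈ Ioc r₂ rp, 0 < u' s := by
    intro s hs
    by_contra hle
    push_neg at hle
    have : s ∈ S := ⟨⟨le_trans hr₂S.1.1 (le_of_lt hs.1), hs.2⟩, hle⟩
    exact absurd (le_csSup hSbdd this) (not_le.2 hs.1)
  have hr₂0 : u' r₂ = 0 := by
    refine le_antisymm hr₂S.2 ?_
    have hcw : ContinuousWithinAt u' (Ioc r₂ rp) r₂ :=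
      ((hsol.2.2.1) r₂ (hsubdom hr₂S.1)).mono
        (fun s hs => hsubdom ⟨le_trans hr₂S.1.1 (le_of_lt hs.1), hs.2⟩)
    rw [ContinuousWithinAt, nhdsWithin_Ioc_eq_nhdsGT hr₂lt] at hcw
    have : ∀ᶠ s in nhdsWithin r₂ (Ioi r₂), 0 ≤ u' s := by
      filter_upwards [Ioc_mem_nhdsGT_of_mem ⟨le_refl _, hr₂lt⟩] with s hs
      exact le_of_lt (hgt s hs)
    exact ge_of_tendsto hcw this
  -- u r₂ = u 0
  have hur₂ : u r₂ = u 0 := by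
    have hΦ : PhiI b f (u r₂) = PhiI b f (u 0) := by
      have h1 := sol_abs_u' hm hf hsol r₂ (hsubdom hr₂S.1)
      rw [hr₂0] at h1
      simp only [abs_zero, Real.zero_rpow (show m ≠ 0 by linarith), mul_zero] at h1
      linarith
    by_contra hne
    have hlt : u r₂ < u 0 :=
      lt_of_le_of_ne (sol_u_le hm hf hsol r₂ (hsubdom hr₂S.1)) hne
    have := sol_Phi_lt hm hf hsol (sol_pos hsol r₂ (hsubdom hr₂S.1)) hlt
    linarith
  -- strict monotone on [r₂, rp]
  have hmono : StrictMonoOn u (Icc r₂ rp) := by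
    refine strictMonoOn_of_deriv_pos (convex_Icc _ _) ?_ ?_
    · exact (sol_cont hsol).mono (fun s hs => hsubdom ⟨le_trans hr₂S.1.1 hs.1, hs.2⟩)
    · intro x hx
      rw [interior_Icc] at hx
      have hxdom : (x : EReal) < R := (hsubdom ⟨le_trans hr₂S.1.1 (le_of_lt hx.1), le_of_lt hx.2⟩).2
      have hx0 : 0 < x := lt_of_le_of_lt hr₂S.1.1 hx.1
      rw [(sol_hasDerivAt hsol hx0 hxdom).deriv]
      exact hgt x ⟨hx.1, le_of_lt hx.2⟩
  have : u r₂ < u rp := hmono ⟨le_refl _, le_of_lt hr₂lt⟩ ⟨le_of_lt hr₂lt, le_refl _⟩ hr₂lt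
  rw [hur₂] at this
  exact absurd (sol_u_le hm hf hsol rp hrp) (not_le.2 this)

lemma sol_u_lt : ∀ r ∈ domR R, 0 < r → u r < u 0 := by
  intro r₀ hr₀ hr₀0
  rcases lt_or_ge (u r₀) (u 0) with h | h
  · exact h
  exfalso
  have heq : u r₀ = u 0 := le_antisymm (sol_u_le hm hf hsol r₀ hr₀) h
  have hsubdom : Icc 0 r₀ ⊆ domR R := Icc_subset_domR hr₀
  -- u is antitone on [0, r₀]
  have hanti : AntitoneOn u (Icc 0 r₀) := by
    refine antitoneOn_of_deriv_nonpos (convex_Icc _ _) ?_ ?_ ?_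
    · exact (sol_cont hsol).mono hsubdom
    · intro x hx
      rw [interior_Icc] at hx
      exact ((sol_hasDerivAt hsol hx.1
        (hsubdom ⟨le_of_lt hx.1, le_of_lt hx.2⟩).2).differentiableAt).differentiableWithinAt
    · intro x hx
      rw [interior_Icc] at hx
      have hxd := hsubdom ⟨le_of_lt hx.1, le_of_lt hx.2⟩
      rw [(sol_hasDerivAt hsol hx.1 hxd.2).deriv]
      exact sol_u'_nonpos hm hf hsol x hxd
  have hconst : ∀ s ∈ Icc 0 r₀, u s = u 0 := by
    intro s hs
    refine le_antisymm (sol_u_le hm hf hsol s (hsubdom hs)) ?_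
    have := hanti hs ⟨hs.1.trans hs.2, le_refl _⟩ hs.2
    rw [heq] at this
    exact this
  -- derivative of u is 0 on Ioo 0 r₀, so w := phiF∘u' is 0 there, contradicting ODE
  set s₀ := r₀ / 2 with hs₀
  have hs₀mem : s₀ ∈ Ioo 0 r₀ := ⟨by positivity, by linarith⟩
  have hs₀dom := hsubdom ⟨le_of_lt hs₀mem.1, le_of_lt hs₀mem.2⟩
  have hu'zero : ∀ x ∈ Ioo 0 r₀, u' x = 0 := by
    intro x hx
    have hxd := hsubdom ⟨le_of_lt hx.1, le_of_lt hx.2⟩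
    have h1 : HasDerivAt u (u' x) x := sol_hasDerivAt hsol hx.1 hxd.2
    have h2 : HasDerivAt u 0 x := by
      refine (hasDerivAt_const x (u 0)).congr_of_eventuallyEq ?_
      filter_upwards [Ioo_mem_nhds hx.1 hx.2] with y hy
      exact hconst y ⟨le_of_lt hy.1, le_of_lt hy.2⟩
    exact h1.unique h2
  have hwconst : HasDerivAt (fun s => phiF m (u' s)) 0 s₀ := by
    refine (hasDerivAt_const s₀ (0:ℝ)).congr_of_eventuallyEq ?_
    filter_upwards [Ioo_mem_nhds hs₀mem.1 hs₀mem.2] with y hy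
    rw [hu'zero y hy]
    simp [phiF]
  have hw := sol_w_deriv hsol hs₀mem.1 hs₀dom.2
  have := hw.unique hwconst
  have hfα : 0 < f (u s₀) := by
    rw [hconst s₀ ⟨le_of_lt hs₀mem.1, le_of_lt hs₀mem.2⟩]
    exact hf.2.2.2 _ (sol_b_lt hm hf hsol)
  rw [neg_eq_zero] at this
  rw [this] at hfα
  exact lt_irrefl 0 hfα

lemma sol_u'_neg {r : ℝ} (h0 : 0 < r) (hR : (r : EReal) < R) : u' r < 0 := by
  have hrdom : r ∈ domR R := ⟨le_of_lt h0, hR⟩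
  rcases lt_or_ge (u' r) 0 with h | h
  · exact h
  exfalso
  have heq : u' r = 0 := le_antisymm (sol_u'_nonpos hm hf hsol r hrdom) h
  have hΦ : PhiI b f (u r) = PhiI b f (u 0) := by
    have h1 := sol_abs_u' hm hf hsol r hrdom
    rw [heq] at h1
    simp only [abs_zero, Real.zero_rpow (show m ≠ 0 by linarith), mul_zero] at h1
    linarith
  have := sol_Phi_lt hm hf hsol (sol_pos hsol r hrdom) (sol_u_lt hm hf hsol r hrdom h0)
  linarith

lemma sol_surj {v : ℝ} (hv0 : 0 < v) (hvα : v < u 0) :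
    ∃ r : ℝ, 0 < r ∧ (r : EReal) < R ∧ u r = v := by
  obtain ⟨r₁, hr₁dom, hr₁0, hur₁, _⟩ := sol_exists_small hm hf hsol hv0
  have hcont : ContinuousOn u (Icc 0 r₁) := (sol_cont hsol).mono (Icc_subset_domR hr₁dom)
  have hmem : v ∈ Icc (u r₁) (u 0) := ⟨le_of_lt hur₁, le_of_lt hvα⟩
  have := intermediate_value_Icc' (le_of_lt hr₁0) hcont hmem
  obtain ⟨r, hr, hur⟩ := this
  have hrne : r ≠ 0 := by
    intro h
    rw [h] at hur
    rw [hur] at hvα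
    exact lt_irrefl _ hvα
  exact ⟨r, lt_of_le_of_ne hr.1 (Ne.symm hrne),
    lt_of_le_of_lt (EReal.coe_le_coe_iff.2 hr.2) hr₁dom.2, hur⟩

end Sol

/-- `h(v) = (m/(m-1) (Φ(α) − Φ(v)))^{1/m}`: the speed `|u'|` as a function of `u`. -/
def hFn (m b : ℝ) (f : ℝ → ℝ) (α v : ℝ) : ℝ :=
  (m / (m - 1) * (PhiI b f α - PhiI b f v)) ^ (1/m : ℝ)

/-- `Ψ(v) = ∫_{α/2}^v dt/h(t)`. -/
def PsiF (m b : ℝ) (f : ℝ → ℝ) (α : ℝ) (v : ℝ) : ℝ :=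
  ∫ t in (α/2)..v, (hFn m b f α t)⁻¹

section Sol2
variable {m b : ℝ} {f : ℝ → ℝ} {R : EReal} {u u' : ℝ → ℝ}
variable (hm : 1 < m) (hf : H1cond b f) (hsol : IsRadialSolution 1 m f R u u')
include hm hf hsol

lemma sol_hFn_pos {v : ℝ} (h0 : 0 < v) (hα : v < u 0) : 0 < hFn m b f (u 0) v :=
  Real.rpow_pos_of_pos (mul_pos (div_pos (by linarith) (by linarith))
    (sub_pos.2 (sol_Phi_lt hm hf hsol h0 hα))) _

lemma sol_hFn_inv_cont :
    ContinuousOn (fun t => (hFn m b f (u 0) t)⁻¹) (Ioo 0 (u 0)) := by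
  have h1 : ContinuousOn (hFn m b f (u 0)) (Ioo 0 (u 0)) := by
    refine ContinuousOn.rpow_const ?_ ?_
    · exact continuousOn_const.mul (continuousOn_const.sub
        (fun v hv => (PhiI_continuousAt hf hv.1).continuousWithinAt))
    · intro x hx
      left
      exact ne_of_gt (mul_pos (div_pos (by linarith) (by linarith))
        (sub_pos.2 (sol_Phi_lt hm hf hsol hx.1 hx.2)))
  exact h1.inv₀ (fun x hx => ne_of_gt (sol_hFn_pos hm hf hsol hx.1 hx.2))

lemma sol_PsiF_hasDeriv {v : ℝ} (hv : v ∈ Ioo 0 (u 0)) :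
    HasDerivAt (PsiF m b f (u 0)) (hFn m b f (u 0) v)⁻¹ v := by
  have hα : 0 < u 0 := sol_pos hsol 0 (zero_mem_domR hsol.1)
  have hhalf : u 0 / 2 ∈ Ioo 0 (u 0) := ⟨by positivity, by linarith⟩
  have hcont := sol_hFn_inv_cont hm hf hsol
  have hoc : OrdConnected (Ioo (0:ℝ) (u 0)) := ordConnected_Ioo
  refine intervalIntegral.integral_hasDerivAt_right ?_ ?_ ?_
  · exact (hcont.mono (hoc.uIcc_subset hhalf hv)).intervalIntegrable
  · exact hcont.stronglyMeasurableAtFilter isOpen_Ioo v hv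
  · exact hcont.continuousAt (isOpen_Ioo.mem_nhds hv)

lemma sol_PsiF_strictMono : StrictMonoOn (PsiF m b f (u 0)) (Ioo 0 (u 0)) := by
  refine strictMonoOn_of_deriv_pos (convex_Ioo _ _) ?_ ?_
  · exact fun v hv => (sol_PsiF_hasDeriv hm hf hsol hv).continuousAt.continuousWithinAt
  · intro x hx
    rw [interior_Ioo] at hx
    rw [(sol_PsiF_hasDeriv hm hf hsol hx).deriv]
    exact inv_pos.2 (sol_hFn_pos hm hf hsol hx.1 hx.2)

lemma sol_abs_u'_eq {r : ℝ} (h0 : 0 < r) (hR : (r : EReal) < R) :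
    u' r = -hFn m b f (u 0) (u r) := by
  have hm0 : m ≠ 0 := by linarith
  have hm1 : m - 1 ≠ 0 := by linarith
  have h1 := sol_abs_u' hm hf hsol r ⟨le_of_lt h0, hR⟩
  have hX : |u' r| ^ m = m / (m - 1) * (PhiI b f (u 0) - PhiI b f (u r)) := by
    rw [← h1]
    field_simp
  have h2 : hFn m b f (u 0) (u r) = |u' r| := by
    rw [hFn, ← hX, ← Real.rpow_mul (abs_nonneg _), mul_one_div_cancel hm0, Real.rpow_one]
  rw [h2, abs_of_neg (sol_u'_neg hm hf hsol h0 hR), neg_neg]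

lemma sol_theta : ∃ C : ℝ,
    (∀ r : ℝ, 0 < r → (r : EReal) < R → PsiF m b f (u 0) (u r) + r = C) ∧
    Filter.Tendsto (PsiF m b f (u 0)) (nhdsWithin (u 0) (Iio (u 0))) (nhds C) := by
  have hα : 0 < u 0 := sol_pos hsol 0 (zero_mem_domR hsol.1)
  set g : ℝ → ℝ := fun r => PsiF m b f (u 0) (u r) + r with hg
  have hmem : ∀ r : ℝ, 0 < r → (r : EReal) < R → u r ∈ Ioo 0 (u 0) := fun r h0 hR =>
    ⟨sol_pos hsol r ⟨le_of_lt h0, hR⟩, sol_u_lt hm hf hsol r ⟨le_of_lt h0, hR⟩ h0⟩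
  have hd : ∀ x : ℝ, 0 < x → (x : EReal) < R → HasDerivAt g 0 x := by
    intro x h0 hR
    have hux := hmem x h0 hR
    have hP : HasDerivAt (fun r => PsiF m b f (u 0) (u r))
        ((hFn m b f (u 0) (u x))⁻¹ * u' x) x :=
      (sol_PsiF_hasDeriv hm hf hsol hux).comp x (sol_hasDerivAt hsol h0 hR)
    have := hP.add (hasDerivAt_id x)
    have hval : (hFn m b f (u 0) (u x))⁻¹ * u' x + 1 = 0 := by
      rw [sol_abs_u'_eq hm hf hsol h0 hR]
      rw [mul_neg, inv_mul_cancel₀ (ne_of_gt (sol_hFn_pos hm hf hsol hux.1 hux.2))]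
      ring
    rw [hval] at this
    exact this
  have hgcont : ∀ r : ℝ, 0 < r → (r : EReal) < R → ContinuousAt g r := by
    intro r h0 hR
    refine ContinuousAt.add ?_ continuousAt_id
    exact ((sol_PsiF_hasDeriv hm hf hsol (hmem r h0 hR)).continuousAt).comp
      (sol_hasDerivAt hsol h0 hR).continuousAt
  have hconst : ∀ rs rr : ℝ, 0 < rs → rs ≤ rr → (rr : EReal) < R → g rr = g rs := by
    intro rs rr h0 hle hR
    have hdomx : ∀ x : ℝ, rs ≤ x → x ≤ rr → (0 < x ∧ (x:EReal) < R) := fun x hx1 hx2 =>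
      ⟨lt_of_lt_of_le h0 hx1, lt_of_le_of_lt (EReal.coe_le_coe_iff.2 hx2) hR⟩
    have := constant_of_has_deriv_right_zero (f := g)
      (fun x hx => ((hgcont x (hdomx x hx.1 hx.2).1 (hdomx x hx.1 hx.2).2).continuousWithinAt))
      (fun x hx => (hd x (hdomx x hx.1 (le_of_lt hx.2)).1
        (hdomx x hx.1 (le_of_lt hx.2)).2).hasDerivWithinAt)
    exact this rr (right_mem_Icc.2 hle)
  obtain ⟨r₀, hr₀0, hr₀R⟩ := EReal.exists_between_coe_real hsol.1
  have hr₀0' : 0 < r₀ := by exact_mod_cast hr₀0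
  refine ⟨g r₀, ?_, ?_⟩
  · intro r h0 hR
    rcases le_or_gt r r₀ with h | h
    · exact (show g r₀ = g r from hconst r r₀ h0 h hr₀R).symm
    · exact show g r = g r₀ from hconst r₀ r hr₀0' (le_of_lt h) hR
  · rw [Metric.tendsto_nhdsWithin_nhds]
    intro ε hε
    set rε := min (ε/2) r₀ with hrε
    have hrε0 : 0 < rε := lt_min (by linarith) hr₀0'
    have hrεR : (rε : EReal) < R :=
      lt_of_le_of_lt (EReal.coe_le_coe_iff.2 (min_le_right _ _)) hr₀R
    have hv₀ := hmem rε hrε0 hrεR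
    set v₀ := u rε with hv₀def
    have hg₀ : PsiF m b f (u 0) v₀ + rε = g r₀ := by
      rcases le_or_gt rε r₀ with h | h
      · exact (show g r₀ = g rε from hconst rε r₀ hrε0 h hr₀R).symm
      · exact show g rε = g r₀ from hconst r₀ rε hr₀0' (le_of_lt h) hrεR
    refine ⟨min (u 0 - v₀) (u 0 / 2), lt_min (by linarith [hv₀.2]) (by positivity),
      fun {v} hv hdist => ?_⟩
    rw [Real.dist_eq] at hdist
    have hvlt : v < u 0 := hv
    have habs : u 0 - v < min (u 0 - v₀) (u 0 / 2) := by
      rw [abs_sub_lt_iff] at hdist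
      exact hdist.2
    have hvgt : v₀ < v := by
      have := min_le_left (u 0 - v₀) (u 0 / 2)
      linarith
    have hvpos : 0 < v := by
      have := min_le_right (u 0 - v₀) (u 0 / 2)
      linarith
    have hvmem : v ∈ Ioo 0 (u 0) := ⟨hvpos, hvlt⟩
    -- lower bound
    have hlow : PsiF m b f (u 0) v₀ ≤ PsiF m b f (u 0) v :=
      le_of_lt (sol_PsiF_strictMono hm hf hsol hv₀ hvmem hvgt)
    -- upper bound via surjectivity
    obtain ⟨rv, hrv0, hrvR, hurv⟩ := sol_surj hm hf hsol hvpos hvlt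
    have hup : PsiF m b f (u 0) v + rv = g r₀ := by
      have := hconst
      rcases le_or_gt rv r₀ with h | h
      · rw [← hurv]; exact (show g r₀ = g rv from hconst rv r₀ hrv0 h hr₀R).symm
      · rw [← hurv]; exact show g rv = g r₀ from hconst r₀ rv hr₀0' (le_of_lt h) hrvR
    rw [Real.dist_eq, abs_sub_lt_iff]
    have hrεe : rε ≤ ε / 2 := min_le_left _ _
    constructor
    · linarith
    · linarith

end Sol2

lemma F_zero_unique {m b : ℝ} {f : ℝ → ℝ} (hm : 1 < m) (hf : H1cond b f)
    (hInt : IntervalIntegrable f volume 0 b) {β₁ β₂ : ℝ} (h1 : b < β₁) (h2 : b < β₂)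
    (hF1 : (∫ τ in (0:ℝ)..β₁, f τ) = 0) (hF2 : (∫ τ in (0:ℝ)..β₂, f τ) = 0) :
    β₁ = β₂ := by
  have hb := hf.1
  have e1 := intervalIntegral.integral_add_adjacent_intervals hInt
    (f_intInt hf hb (lt_trans hb h1))
  have e2 := intervalIntegral.integral_add_adjacent_intervals hInt
    (f_intInt hf hb (lt_trans hb h2))
  rw [hF1] at e1
  rw [hF2] at e2
  have hPhi : PhiI b f β₁ = PhiI b f β₂ := by
    rw [PhiI, PhiI]; linarith
  by_contra hne
  rcases lt_or_gt_of_ne hne with h | h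
  · exact absurd hPhi (ne_of_lt (PhiI_strictMono hf (le_of_lt h1) h))
  · exact absurd hPhi.symm (ne_of_lt (PhiI_strictMono hf (le_of_lt h2) h))

lemma sol_R_lt {m b : ℝ} {f : ℝ → ℝ} {Ra Rb : EReal} {ua ua' ub ub' : ℝ → ℝ}
    (hm : 1 < m) (hf : H1cond b f)
    (ha : IsRadialSolution 1 m f Ra ua ua') (hb : IsRadialSolution 1 m f Rb ub ub')
    (heq : ∀ r : ℝ, 0 < r → (r : EReal) < Ra → (r : EReal) < Rb → ua r = ub r)
    (hlt : Ra < Rb) : False := by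
  have hRa0 := ha.1
  have hnt : Ra ≠ ⊤ := ne_top_of_lt hlt
  have hnb : Ra ≠ ⊥ := ne_bot_of_gt hRa0
  set ρ := Ra.toReal with hρ
  have hRa : (ρ : EReal) = Ra := EReal.coe_toReal hnt hnb
  have hρ0 : 0 < ρ := by
    have h' : ((0:ℝ) : EReal) < (ρ : EReal) := by
      rw [hRa]; exact_mod_cast hRa0
    exact_mod_cast h'
  have hρb : (ρ : EReal) < Rb := hRa ▸ hlt
  have hρdom : ρ ∈ domR Rb := ⟨le_of_lt hρ0, hρb⟩
  have hubρ : 0 < ub ρ := hb.2.2.2.1 ρ hρdom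
  have hta : Filter.Tendsto ua (nhdsWithin ρ (Iio ρ)) (nhds 0) := by
    have h' := ha.2.2.2.2.2.2.1
    rw [← hRa, limR_coe] at h'
    exact h'
  have hcb : Filter.Tendsto ub (nhdsWithin ρ (Iio ρ)) (nhds (ub ρ)) := by
    have h1 : ContinuousWithinAt ub (Ioo 0 ρ) ρ :=
      ((sol_cont hb) ρ hρdom).mono
        (fun s hs => ⟨le_of_lt hs.1, lt_trans (by exact_mod_cast hs.2) hρb⟩)
    rw [ContinuousWithinAt, nhdsWithin_Ioo_eq_nhdsLT hρ0] at h1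
    exact h1
  have hevent : ua =ᶠ[nhdsWithin ρ (Iio ρ)] ub := by
    filter_upwards [Ioo_mem_nhdsLT hρ0] with r hr
    refine heq r hr.1 ?_ ?_
    · rw [← hRa]; exact_mod_cast hr.2
    · exact lt_trans (by exact_mod_cast hr.2 : (r : EReal) < (ρ : EReal)) hρb
  have := tendsto_nhds_unique (hta.congr' hevent) hcb
  rw [← this] at hubρ
  exact lt_irrefl 0 hubρ


/-- for `N = 1`, `m > 1`, under (H1), there is at most one radial solution,
and for any radial solution `u`, `α = u 0` is the unique number in `(b, ∞)` with `F α = 0`. -/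
theorem stmt0 (m b : ℝ) (f : ℝ → ℝ) (hm : 1 < m) (hf : H1cond b f)
    (R₁ R₂ : EReal) (u₁ u₁' u₂ u₂' : ℝ → ℝ)
    (h₁ : IsRadialSolution 1 m f R₁ u₁ u₁')
    (h₂ : IsRadialSolution 1 m f R₂ u₂ u₂') :
    (R₁ = R₂ ∧ ∀ r ∈ domR R₁, u₁ r = u₂ r) ∧
    (b < u₁ 0 ∧ (∫ τ in (0 : ℝ)..(u₁ 0), f τ) = 0 ∧
      ∀ β : ℝ, b < β → (∫ τ in (0 : ℝ)..β, f τ) = 0 → β = u₁ 0) := by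
  have hα₁b : b < u₁ 0 := sol_b_lt hm hf h₁
  have hα₂b : b < u₂ 0 := sol_b_lt hm hf h₂
  have hF₁ : (∫ τ in (0:ℝ)..(u₁ 0), f τ) = 0 := sol_F_zero hm hf h₁
  have hF₂ : (∫ τ in (0:ℝ)..(u₂ 0), f τ) = 0 := sol_F_zero hm hf h₂
  have hInt : IntervalIntegrable f volume 0 b := by
    rw [intervalIntegrable_iff, uIoc_of_le (le_of_lt hf.1)]
    exact sol_integrableOn hm hf h₁
  have hαeq : u₂ 0 = u₁ 0 := F_zero_unique hm hf hInt hα₂b hα₁b hF₂ hF₁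
  obtain ⟨C₁, hC₁, hT₁⟩ := sol_theta hm hf h₁
  obtain ⟨C₂, hC₂, hT₂⟩ := sol_theta hm hf h₂
  rw [hαeq] at hC₂ hT₂
  have hCeq : C₁ = C₂ := tendsto_nhds_unique hT₁ hT₂
  have hpt : ∀ r : ℝ, 0 < r → (r : EReal) < R₁ → (r : EReal) < R₂ → u₁ r = u₂ r := by
    intro r h0 h1R h2R
    have e1 := hC₁ r h0 h1R
    have e2 := hC₂ r h0 h2R
    have hPsi : PsiF m b f (u₁ 0) (u₁ r) = PsiF m b f (u₁ 0) (u₂ r) := by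
      rw [hCeq] at e1; linarith
    have hmm1 : u₁ r ∈ Ioo 0 (u₁ 0) :=
      ⟨sol_pos h₁ r ⟨le_of_lt h0, h1R⟩, sol_u_lt hm hf h₁ r ⟨le_of_lt h0, h1R⟩ h0⟩
    have hmm2 : u₂ r ∈ Ioo 0 (u₁ 0) := by
      rw [← hαeq]
      exact ⟨sol_pos h₂ r ⟨le_of_lt h0, h2R⟩, sol_u_lt hm hf h₂ r ⟨le_of_lt h0, h2R⟩ h0⟩
    exact (sol_PsiF_strictMono hm hf h₁).injOn hmm1 hmm2 hPsi
  have hReq : R₁ = R₂ := by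
    by_contra hne
    rcases lt_or_gt_of_ne hne with h | h
    · exact sol_R_lt hm hf h₁ h₂ hpt h
    · exact sol_R_lt hm hf h₂ h₁ (fun r h0 hra hrb => (hpt r h0 hrb hra).symm) h
  refine ⟨⟨hReq, ?_⟩, hα₁b, hF₁, fun β hβ hFβ => F_zero_unique hm hf hInt hβ hα₁b hFβ hF₁⟩
  intro r hr
  rcases eq_or_lt_of_le hr.1 with h0 | h0
  · rw [← h0]
    exact hαeq.symm
  · exact hpt r h0 hr.2 (hReq ▸ hr.2)

end
end

section
/- Let m > 1 and 1 ≤ N ≤ m, and assume (H1). If u is a radial solution on [0,R), then r^{(N−1)/(m−1)} |u'(r)| → 0 as r → R (where R ≤ ∞). -/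
open Filter Set MeasureTheory intervalIntegral

noncomputable section

/- ---------- auxiliary lemmas ---------- -/

lemma limR_top_eq : limR ⊤ = atTop := by
  have h1 : (Iio (⊤:EReal)) = {(⊤:EReal)}ᶜ := by ext x; simp [lt_top_iff_ne_top]
  rw [limR, h1, EReal.nhdsWithin_top, Filter.comap_map EReal.coe_injective]

lemma limR_coe_eq (c : ℝ) : limR (c : EReal) = nhdsWithin c (Set.Iio c) := by
  rw [limR, nhdsWithin, nhdsWithin, Filter.comap_inf, Filter.comap_principal, EReal.nhds_coe,
    Filter.comap_map EReal.coe_injective]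
  congr 1
  congr 1
  ext x
  simp [EReal.coe_lt_coe_iff]

lemma no_lower_bound (w w' : ℝ → ℝ) (r₁ k : ℝ) (hr₁ : 0 < r₁) (hk : 0 < k)
    (hd : ∀ r, r₁ ≤ r → HasDerivAt w (w' r) r)
    (hb : ∀ r, r₁ ≤ r → k / r ≤ w' r)
    (hw : Tendsto w atTop (nhds 0)) : False := by
  set φ : ℝ → ℝ := fun r => w r - k * Real.log r with hφ
  have hdφ : ∀ r, r₁ ≤ r → HasDerivAt φ (w' r - k / r) r := by
    intro r hr
    have h0 : r ≠ 0 := ne_of_gt (lt_of_lt_of_le hr₁ hr)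
    have := (hd r hr).sub ((Real.hasDerivAt_log h0).const_mul k)
    rw [div_eq_mul_inv]
    exact this
  have hmono : MonotoneOn φ (Ici r₁) := by
    apply monotoneOn_of_hasDerivWithinAt_nonneg (convex_Ici r₁)
      (fun x hx => (hdφ x hx).continuousAt.continuousWithinAt)
      (fun x hx => (hdφ x (by rw [interior_Ici] at hx; exact hx.le)).hasDerivWithinAt)
    intro x hx
    rw [interior_Ici] at hx
    have := hb x hx.le
    linarith
  have hge : ∀ r, r₁ ≤ r → φ r₁ + k * Real.log r ≤ w r := by
    intro r hr
    have := hmono (mem_Ici.2 le_rfl) (mem_Ici.2 hr) hr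
    simp only [hφ] at this ⊢
    linarith
  have htop : Tendsto w atTop atTop := by
    apply tendsto_atTop_mono' atTop (eventually_atTop.2 ⟨r₁, hge⟩)
    exact tendsto_atTop_add_const_left _ _ (Real.tendsto_log_atTop.const_mul_atTop hk)
  exact not_tendsto_nhds_of_tendsto_atTop htop 0 hw

lemma pow_convert (N : ℕ) (m : ℝ) (hN1 : 1 ≤ N) {v : ℝ} (hv : 0 < v) (r : ℝ) :
    r ^ (N-1) * v ^ (m-2) * v = r ^ ((N:ℝ)-1) * v ^ (m-1) := by
  rw [← Real.rpow_natCast r (N-1), Nat.cast_sub hN1]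
  push_cast
  rw [mul_assoc]
  congr 1
  rw [show m - 1 = (m-2) + 1 by ring, Real.rpow_add hv, Real.rpow_one]

lemma keystep (N : ℕ) (m : ℝ) (hm : 1 < m) (hN1 : 1 ≤ N) (hNm : (N:ℝ) ≤ m)
    (c r v : ℝ) (hc : 0 < c) (hr : 1 ≤ r) (hv : 0 < v)
    (h : c ≤ r ^ (N-1) * v ^ (m-2) * v) : c ^ (1/(m-1)) / r ≤ v := by
  have hm1 : (0:ℝ) < m - 1 := by linarith
  have hr0 : (0:ℝ) < r := lt_of_lt_of_le one_pos hr
  have e2 : r ^ ((N:ℝ)-1) ≤ r ^ (m-1) := Real.rpow_le_rpow_of_exponent_le hr (by linarith)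
  have e3 : c ≤ (r*v) ^ (m-1) := by
    rw [Real.mul_rpow hr0.le hv.le]
    calc c ≤ r ^ ((N:ℝ)-1) * v^(m-1) := (pow_convert N m hN1 hv r) ▸ h
      _ ≤ r^(m-1) * v^(m-1) := mul_le_mul_of_nonneg_right e2 (Real.rpow_nonneg hv.le _)
  have e4 : c ^ (1/(m-1)) ≤ r * v := by
    have h5 := Real.rpow_le_rpow hc.le e3 (by positivity : (0:ℝ) ≤ 1/(m-1))
    rwa [← Real.rpow_mul (by positivity : (0:ℝ) ≤ r*v), mul_one_div,
      div_self (ne_of_gt hm1), Real.rpow_one] at h5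
  rw [div_le_iff₀ hr0]
  exact le_trans e4 (le_of_eq (mul_comm r v))

lemma abs_g_eq (N : ℕ) (m : ℝ) (hm : 1 < m) (hN1 : 1 ≤ N) {r : ℝ} (hr : 1 ≤ r) (x : ℝ) :
    |r ^ (N-1) * |x| ^ (m-2) * x| ^ (1/(m-1)) = r ^ (((N:ℝ)-1)/(m-1)) * |x| := by
  have hm1 : (0:ℝ) < m - 1 := by linarith
  have hr0 : (0:ℝ) < r := lt_of_lt_of_le one_pos hr
  by_cases hx : x = 0
  · simp [hx, Real.zero_rpow (by positivity : (1:ℝ)/(m-1) ≠ 0),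
      Real.zero_rpow (show (m-1)⁻¹ ≠ 0 by positivity)]
  · have hax : 0 < |x| := abs_pos.2 hx
    have h1 : |r ^ (N-1) * |x| ^ (m-2) * x| = r ^ ((N:ℝ)-1) * |x| ^ (m-1) := by
      rw [abs_mul, abs_mul, abs_of_nonneg (pow_nonneg hr0.le _),
        abs_of_nonneg (Real.rpow_nonneg (abs_nonneg x) _)]
      exact pow_convert N m hN1 hax r
    rw [h1, Real.mul_rpow (Real.rpow_nonneg hr0.le _) (Real.rpow_nonneg hax.le _),
      ← Real.rpow_mul hr0.le, ← Real.rpow_mul hax.le, mul_one_div, mul_one_div,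
      div_self (ne_of_gt hm1), Real.rpow_one]

/-- for `m > 1`, `1 ≤ N ≤ m`, under (H1), any radial solution satisfies
`r^{(N-1)/(m-1)} |u'(r)| → 0` as `r → R` (where `R ≤ ∞`). -/
theorem stmt3 (N : ℕ) (m b : ℝ) (f : ℝ → ℝ) (hm : 1 < m)
    (hN1 : 1 ≤ N) (hNm : (N : ℝ) ≤ m) (hf : H1cond b f)
    (R : EReal) (u u' : ℝ → ℝ) (hu : IsRadialSolution N m f R u u') :
    Filter.Tendsto (fun r : ℝ => r ^ (((N : ℝ) - 1) / (m - 1)) * |u' r|)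
      (limR R) (nhds 0) := by
  have hm1 : (0:ℝ) < m - 1 := by linarith
  induction R using EReal.rec with
  | bot =>
    exact absurd hu.1 (by simp)
  | coe c =>
    obtain ⟨hR, hderiv, hu'c, hupos, hu'0, hODE, huto, hu'to⟩ := hu
    have hc : 0 < c := EReal.coe_pos.1 hR
    rw [limR_coe_eq] at hu'to ⊢
    have h1 : Tendsto (fun r : ℝ => r ^ (((N:ℝ)-1)/(m-1))) (nhdsWithin c (Set.Iio c))
        (nhds (c ^ (((N:ℝ)-1)/(m-1)))) :=
      (Real.continuousAt_rpow_const c _ (Or.inl (ne_of_gt hc))).continuousWithinAt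
    have := h1.mul hu'to.abs
    simpa using this
  | top =>
    obtain ⟨hR, hderiv, hu'c, hupos, hu'0, hODE, huto, hu'to⟩ := hu
    rw [limR_top_eq] at huto hu'to ⊢
    set g : ℝ → ℝ := fun s : ℝ => s ^ (N - 1) * |u' s| ^ (m - 2) * u' s with hg
    have hmemdom : ∀ r : ℝ, 0 ≤ r → r ∈ domR ⊤ := fun r hr => ⟨hr, EReal.coe_lt_top r⟩
    have hderiv' : ∀ r : ℝ, 0 < r → HasDerivAt u (u' r) r := by
      intro r hr
      exact (hderiv r (hmemdom r hr.le)).hasDerivAt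
        (mem_of_superset (Ioi_mem_nhds hr) (fun x hx => hmemdom x (le_of_lt hx)))
    have hODE' : ∀ r : ℝ, 0 < r → HasDerivAt g (-(r ^ (N-1) * f (u r))) r :=
      fun r hr => hODE r hr (EReal.coe_lt_top r)
    -- choose r₀
    obtain ⟨r₀', hr₀'⟩ := eventually_atTop.1 (huto.eventually_lt_const hf.1)
    set r₀ : ℝ := max r₀' 1 with hr₀def
    have hr₀1 : (1:ℝ) ≤ r₀ := le_max_right _ _
    have hr₀0 : (0:ℝ) < r₀ := lt_of_lt_of_le one_pos hr₀1
    have hfle : ∀ r, r₀ ≤ r → f (u r) ≤ 0 := by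
      intro r hr
      exact hf.2.2.1 (u r) (hupos r (hmemdom r (by linarith)))
        (le_of_lt (hr₀' r (le_trans (le_max_left _ _) hr)))
    -- g is monotone on [r₀, ∞)
    have gmono : MonotoneOn g (Ici r₀) := by
      apply monotoneOn_of_hasDerivWithinAt_nonneg (convex_Ici r₀)
        (fun x hx => (hODE' x (lt_of_lt_of_le hr₀0 hx)).continuousAt.continuousWithinAt)
        (fun x hx => (hODE' x (lt_of_lt_of_le hr₀0
          (by rw [interior_Ici] at hx; exact hx.le))).hasDerivWithinAt)
      intro x hx
      rw [interior_Ici] at hx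
      have h1 : (0:ℝ) ≤ x ^ (N-1) := pow_nonneg (le_of_lt (lt_trans hr₀0 hx)) _
      have h2 := hfle x hx.le
      have := mul_nonneg h1 (neg_nonneg.2 h2)
      nlinarith
    -- if g is eventually ≥ c > 0, contradiction
    have keypos : ∀ c, 0 < c → ∀ r₁, r₀ ≤ r₁ → ¬ (∀ r, r₁ ≤ r → c ≤ g r) := by
      intro c hc r₁ hr₁ hall
      have hr₁0 : 0 < r₁ := lt_of_lt_of_le hr₀0 hr₁
      refine no_lower_bound u u' r₁ (c ^ (1/(m-1))) hr₁0
        (Real.rpow_pos_of_pos hc _) (fun r hr => hderiv' r (lt_of_lt_of_le hr₁0 hr)) ?_ huto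
      intro r hr
      have hr1 : (1:ℝ) ≤ r := le_trans (le_trans hr₀1 hr₁) hr
      have hcg := hall r hr
      have hu'pos : 0 < u' r := by
        by_contra h
        push_neg at h
        have hnn : (0:ℝ) ≤ r ^ (N-1) * |u' r| ^ (m-2) :=
          mul_nonneg (pow_nonneg (by linarith) _) (Real.rpow_nonneg (abs_nonneg _) _)
        have : g r ≤ 0 := mul_nonpos_iff.2 (Or.inl ⟨hnn, h⟩)
        linarith
      have habs : |u' r| = u' r := abs_of_pos hu'pos
      rw [hg] at hcg
      simp only [habs] at hcg
      exact keystep N m hm hN1 hNm c r (u' r) hc hr1 hu'pos hcg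
    -- if g is eventually ≤ -c < 0, contradiction
    have keyneg : ∀ c, 0 < c → ∀ r₁, r₀ ≤ r₁ → ¬ (∀ r, r₁ ≤ r → g r ≤ -c) := by
      intro c hc r₁ hr₁ hall
      have hr₁0 : 0 < r₁ := lt_of_lt_of_le hr₀0 hr₁
      refine no_lower_bound (fun r => -u r) (fun r => -u' r) r₁ (c ^ (1/(m-1))) hr₁0
        (Real.rpow_pos_of_pos hc _)
        (fun r hr => (hderiv' r (lt_of_lt_of_le hr₁0 hr)).neg) ?_ (by simpa using huto.neg)
      intro r hr
      have hr1 : (1:ℝ) ≤ r := le_trans (le_trans hr₀1 hr₁) hr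
      have hcg := hall r hr
      have hu'neg : u' r < 0 := by
        by_contra h
        push_neg at h
        have hnn : (0:ℝ) ≤ g r :=
          mul_nonneg (mul_nonneg (pow_nonneg (by linarith) _)
            (Real.rpow_nonneg (abs_nonneg _) _)) h
        linarith
      have habs : |u' r| = -u' r := abs_of_neg hu'neg
      have hcg' : c ≤ r ^ (N-1) * |(-u' r)| ^ (m-2) * (-u' r) := by
        rw [abs_neg]
        rw [hg] at hcg
        simp only [habs] at hcg ⊢
        nlinarith [hcg]
      have := keystep N m hm hN1 hNm c r (-u' r) hc hr1 (by linarith) (by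
        simpa [habs] using hcg')
      exact this
    -- g tends to 0
    have hg0 : Tendsto g atTop (nhds 0) := by
      rw [NormedAddCommGroup.tendsto_nhds_zero]
      intro ε hε
      have hgle : ∀ r, r₀ ≤ r → g r ≤ 0 := by
        intro r hr
        by_contra h
        push_neg at h
        exact keypos (g r) h r hr (fun s hs => gmono (mem_Ici.2 hr) (mem_Ici.2 (hr.trans hs)) hs)
      have hlow : ∃ r₁, r₀ ≤ r₁ ∧ -ε < g r₁ := by
        by_contra h
        push_neg at h
        exact keyneg ε hε r₀ le_rfl (fun r hr => h r hr)
      obtain ⟨r₁, hr₁, hgr₁⟩ := hlow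
      filter_upwards [eventually_ge_atTop r₁] with r hr
      have h1 := gmono (mem_Ici.2 hr₁) (mem_Ici.2 (hr₁.trans hr)) hr
      have h2 := hgle r (hr₁.trans hr)
      rw [Real.norm_eq_abs, abs_lt]
      exact ⟨by linarith, by linarith⟩
    -- conclude
    have habs0 : Tendsto (fun r => |g r| ^ (1/(m-1))) atTop (nhds 0) := by
      have := (hg0.abs).rpow_const (p := 1/(m-1)) (Or.inr (by positivity))
      simpa [Real.zero_rpow (show (m-1)⁻¹ ≠ 0 by positivity), one_div] using this
    apply habs0.congr'
    filter_upwards [eventually_ge_atTop (1:ℝ)] with r hr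
    exact abs_g_eq N m hm hN1 hr (u' r)

end
end

section
/- Let N = 1 and m > 1, and assume (H1). If u is a radial solution on [0,R), then F(u(0)) = 0, where F(u) = ∫₀^u f(τ) dτ. -/
open Filter Set MeasureTheory intervalIntegral

noncomputable section

/-- If `s ↦ |v s|^{m-2} v s` has derivative `-c` at `r`, then the "energy"
`s ↦ (m-1)/m |v s|^m` has derivative `-c * v r` at `r`. -/
lemma energy_hasDerivAt {m : ℝ} (hm : 1 < m) {c : ℝ} {v : ℝ → ℝ} {r : ℝ}
    (h : HasDerivAt (fun s => |v s| ^ (m - 2) * v s) (-c) r) :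
    HasDerivAt (fun s => (m - 1) / m * |v s| ^ m) (-c * v r) r := by
  have hm1 : (0:ℝ) < m - 1 := by linarith
  have hm0 : (0:ℝ) < m := by linarith
  set p : ℝ := m / (m - 1) with hpdef
  have hp1 : 1 < p := (one_lt_div hm1).2 (by linarith)
  have hmp : (m - 1) * p = m := mul_div_cancel₀ m (by linarith)
  have habs : ∀ s : ℝ, |(|v s| ^ (m - 2) * v s)| = |v s| ^ (m - 1) := by
    intro s
    rcases eq_or_ne (v s) 0 with h0 | h0
    · simp [h0, Real.zero_rpow (by linarith : m - 1 ≠ 0)]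
    · have hv : (0:ℝ) < |v s| := abs_pos.2 h0
      rw [abs_mul, abs_of_nonneg (Real.rpow_nonneg (abs_nonneg _) _),
        show m - 1 = (m - 2) + 1 by ring, Real.rpow_add hv, Real.rpow_one]
  set W : ℝ → ℝ := fun s => |v s| ^ (m - 2) * v s with hWdef
  have hfun : (fun s => (m - 1) / m * |v s| ^ m)
      = (fun x : ℝ => (m - 1) / m * |x| ^ p) ∘ W := by
    funext s
    simp only [Function.comp_apply, hWdef, habs s]
    rw [← Real.rpow_mul (abs_nonneg _), hmp]
  have hphi : HasDerivAt (fun x : ℝ => (m - 1) / m * |x| ^ p)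
      ((m - 1) / m * (p * |W r| ^ (p - 2) * (W r))) (W r) :=
    (hasDerivAt_abs_rpow (W r) hp1).const_mul _
  have hcomp := hphi.comp r h
  rw [hfun]
  refine hcomp.congr_deriv (Eq.symm ?_)
  have hcoef : (m - 1) / m * p = 1 := by
    field_simp [hpdef]
    exact hmp
  have hWW : |W r| ^ (p - 2) * W r = v r := by
    rcases eq_or_ne (v r) 0 with h0 | h0
    · simp [hWdef, h0]
    · have hv : (0:ℝ) < |v r| := abs_pos.2 h0
      have hW2 : |W r| ^ (p - 2) = |v r| ^ ((m - 1) * (p - 2)) := by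
        rw [hWdef, habs r, ← Real.rpow_mul (abs_nonneg _)]
      rw [hW2, hWdef]
      have h2m : (m - 1) * (p - 2) = 2 - m := by
        have := hmp; nlinarith [hmp]
      rw [h2m, ← mul_assoc, ← Real.rpow_add hv]
      norm_num
  calc -c * v r = (m - 1) / m * p * (|W r| ^ (p - 2) * W r) * (-c) := by
        rw [hcoef, hWW]; ring
    _ = (m - 1) / m * (p * |W r| ^ (p - 2) * W r) * -c := by ring

lemma limR_eventually {R : EReal} (hR : 0 < R) :
    ∀ᶠ r : ℝ in limR R, 0 < r ∧ (r : EReal) < R := by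
  have hmem : Ioi (0 : EReal) ∩ Iio R ∈ nhdsWithin R (Iio R) :=
    inter_mem (mem_nhdsWithin_of_mem_nhds (isOpen_Ioi.mem_nhds hR)) self_mem_nhdsWithin
  have h2 : Real.toEReal ⁻¹' (Ioi (0:EReal) ∩ Iio R) ∈ limR R :=
    Filter.preimage_mem_comap hmem
  filter_upwards [h2] with r hr
  refine ⟨?_, hr.2⟩
  have h3 : (0:EReal) < (r:EReal) := hr.1
  exact_mod_cast h3

/-- for `N = 1`, `m > 1`, under (H1), any radial solution satisfies
`F(u(0)) = 0`, where `F(u) = ∫₀^u f(τ) dτ`. -/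
theorem stmt7 (m b : ℝ) (f : ℝ → ℝ) (hm : 1 < m) (hf : H1cond b f)
    (R : EReal) (u u' : ℝ → ℝ) (hu : IsRadialSolution 1 m f R u u') :
    (∫ τ in (0 : ℝ)..(u 0), f τ) = 0 := by
  obtain ⟨hR, hderiv, hu'cont, hupos, hu'0, hode, hulim, hu'lim⟩ := hu
  by_cases hint : IntervalIntegrable f volume 0 (u 0)
  swap
  · exact intervalIntegral.integral_undef hint
  have hm0 : (0:ℝ) < m := by linarith
  have hfc : ContinuousOn f (Set.Ioi 0) := hf.2.1
  have h0dom : (0:ℝ) ∈ domR R := ⟨le_refl 0, by simpa using hR⟩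
  have hu00 : 0 < u 0 := hupos 0 h0dom
  have hucont : ContinuousOn u (domR R) := fun x hx => (hderiv x hx).continuousWithinAt
  set G : ℝ → ℝ := fun s => (m - 1) / m * |u' s| ^ m with hGdef
  have hGderiv : ∀ r : ℝ, 0 < r → (r : EReal) < R →
      HasDerivAt G (-(f (u r)) * u' r) r := by
    intro r hr hrR
    have h1 : HasDerivAt (fun s : ℝ => |u' s| ^ (m - 2) * u' s) (-(f (u r))) r := by
      have := hode r hr hrR
      simpa using this
    exact energy_hasDerivAt hm h1
  have hG0 : G 0 = 0 := by simp [hGdef, hu'0, Real.zero_rpow hm0.ne']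
  -- key identity : ∫_{u r}^{u 0} f = G r
  have key : ∀ r : ℝ, 0 < r → (r : EReal) < R →
      (∫ τ in (u r)..(u 0), f τ) = G r := by
    intro r hr hrR
    have hIcc : Icc 0 r ⊆ domR R := by
      intro x hx
      exact ⟨hx.1, lt_of_le_of_lt (EReal.coe_le_coe_iff.2 hx.2) hrR⟩
    have huIcc : uIcc (0:ℝ) r = Icc 0 r := uIcc_of_le hr.le
    have hIoo : Ioo 0 r ⊆ domR R := Ioo_subset_Icc_self.trans hIcc
    have hda : ∀ x ∈ Ioo 0 r, HasDerivAt u (u' x) x := by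
      intro x hx
      have hmem : domR R ∈ nhds x := mem_nhds_iff.2 ⟨Ioo 0 r, hIoo, isOpen_Ioo, hx⟩
      exact (hderiv x (hIoo hx)).hasDerivAt hmem
    have hucr : ContinuousOn u (Icc 0 r) := hucont.mono hIcc
    have hmaps : MapsTo u (Icc 0 r) (Ioi 0) := fun x hx => hupos x (hIcc hx)
    have hsubst : (∫ s in (0:ℝ)..r, u' s • (f ∘ u) s) = ∫ τ in (u 0)..(u r), f τ := by
      apply intervalIntegral.integral_comp_smul_deriv''
      · rwa [huIcc]
      · rw [min_eq_left hr.le, max_eq_right hr.le]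
        exact fun x hx => (hda x hx).hasDerivWithinAt
      · rw [huIcc]; exact hu'cont.mono hIcc
      · rw [huIcc]
        exact hfc.mono (by rintro _ ⟨x, hx, rfl⟩; exact hupos x (hIcc hx))
    have hGcont : ContinuousOn G (Icc 0 r) := by
      apply ContinuousOn.mul continuousOn_const
      exact ((hu'cont.mono hIcc).abs).rpow_const (fun x _ => Or.inr hm0.le)
    have hint2 : IntervalIntegrable (fun s => -(f (u s)) * u' s) volume 0 r := by
      apply ContinuousOn.intervalIntegrable
      rw [huIcc]
      exact ((hfc.comp hucr hmaps).neg).mul (hu'cont.mono hIcc)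
    have hftc : (∫ s in (0:ℝ)..r, -(f (u s)) * u' s) = G r - G 0 :=
      intervalIntegral.integral_eq_sub_of_hasDeriv_right_of_le hr.le hGcont
        (fun x hx => (hGderiv x hx.1
          (lt_trans (EReal.coe_lt_coe_iff.2 hx.2) hrR)).hasDerivWithinAt) hint2
    have hneg : (∫ s in (0:ℝ)..r, -(f (u s)) * u' s)
        = -∫ s in (0:ℝ)..r, u' s • (f ∘ u) s := by
      rw [← intervalIntegral.integral_neg]
      apply intervalIntegral.integral_congr
      intro x _
      simp only [Function.comp_apply, smul_eq_mul]
      ring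
    calc (∫ τ in (u r)..(u 0), f τ) = -∫ τ in (u 0)..(u r), f τ :=
          intervalIntegral.integral_symm (u 0) (u r)
      _ = -∫ s in (0:ℝ)..r, u' s • (f ∘ u) s := by rw [hsubst]
      _ = ∫ s in (0:ℝ)..r, -(f (u s)) * u' s := hneg.symm
      _ = G r - G 0 := hftc
      _ = G r := by rw [hG0, sub_zero]
  -- limits
  haveI := limR_neBot hR
  have hev := limR_eventually hR
  have hGlim : Tendsto G (limR R) (nhds 0) := by
    have hc : ContinuousAt (fun x : ℝ => (m - 1) / m * |x| ^ m) 0 :=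
      ((continuous_abs.continuousAt).rpow_const (Or.inr hm0.le)).const_mul _
    have h0 : (m - 1) / m * |(0:ℝ)| ^ m = 0 := by
      simp [Real.zero_rpow hm0.ne']
    have hcm := hc.tendsto.comp hu'lim
    rw [h0] at hcm
    exact hcm
  have hIOn : IntegrableOn f (uIcc 0 (u 0)) volume := by
    rw [uIcc_of_le hu00.le]
    exact (intervalIntegrable_iff_integrableOn_Icc_of_le hu00.le).1 hint
  have hHcont : ContinuousWithinAt (fun t => ∫ τ in t..(u 0), f τ) (uIcc 0 (u 0)) 0 :=
    (intervalIntegral.continuousOn_primitive_interval_left hIOn) 0 left_mem_uIcc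
  have humem : ∀ᶠ r : ℝ in limR R, u r ∈ uIcc 0 (u 0) := by
    filter_upwards [hev, hulim.eventually_lt_const hu00] with r hr hr2
    rw [uIcc_of_le hu00.le]
    exact ⟨(hupos r ⟨hr.1.le, hr.2⟩).le, hr2.le⟩
  have hulim' : Tendsto u (limR R) (nhdsWithin 0 (uIcc 0 (u 0))) :=
    tendsto_nhdsWithin_iff.2 ⟨hulim, humem⟩
  have hHlim : Tendsto (fun r => ∫ τ in (u r)..(u 0), f τ) (limR R)
      (nhds (∫ τ in (0:ℝ)..(u 0), f τ)) := hHcont.tendsto.comp hulim'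
  have hGlim' : Tendsto (fun r => ∫ τ in (u r)..(u 0), f τ) (limR R) (nhds 0) := by
    apply Tendsto.congr' _ hGlim
    filter_upwards [hev] with r hr
    exact (key r hr.1 hr.2).symm
  exact tendsto_nhds_unique hHlim hGlim'

end
end

section
/- Let m > 1 and N ≥ 2, and assume (H1). If u is a radial solution on [0,R) and r₀ ∈ [0,R) satisfies u'(r₀) = 0 and u(r₀) > 0, then u(r) ≤ u(r₀) for all r ∈ (r₀, R). -/
open Filter Set MeasureTheory intervalIntegral
open Topology

noncomputable section

/-- helper identity: `| |a|^(m-2) * a | = |a|^(m-1)`. -/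
private lemma aux_abs {m : ℝ} (hm : 1 < m) (a : ℝ) :
    |(|a| ^ (m - 2) * a)| = |a| ^ (m - 1) := by
  rcases eq_or_ne a 0 with rfl | ha
  · simp [Real.zero_rpow (show m - 1 ≠ 0 by intro h; linarith)]
  · have hpos : (0:ℝ) < |a| := abs_pos.2 ha
    rw [abs_mul, abs_of_nonneg (Real.rpow_nonneg (abs_nonneg a) _),
      show m - 1 = m - 2 + 1 by ring, Real.rpow_add hpos, Real.rpow_one]

private lemma aux_pow {m : ℝ} (hm : 1 < m) (a : ℝ) :
    |(|a| ^ (m - 2) * a)| ^ (m / (m - 1)) = |a| ^ m := by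
  have h1 : m - 1 ≠ 0 := by intro h; linarith
  rw [aux_abs hm, ← Real.rpow_mul (abs_nonneg a),
    show (m - 1) * (m / (m - 1)) = m by field_simp]

private lemma aux_inv {m : ℝ} (hm : 1 < m) (a : ℝ) :
    |(|a| ^ (m - 2) * a)| ^ (m / (m - 1) - 2) * (|a| ^ (m - 2) * a) = a := by
  have h1 : m - 1 ≠ 0 := by intro h; linarith
  rcases eq_or_ne a 0 with rfl | ha
  · simp
  · have hpos : (0:ℝ) < |a| := abs_pos.2 ha
    rw [aux_abs hm, ← Real.rpow_mul (abs_nonneg a),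
      show (m - 1) * (m / (m - 1) - 2) = 2 - m by field_simp; ring,
      ← mul_assoc, ← Real.rpow_add hpos, show 2 - m + (m - 2) = 0 by ring,
      Real.rpow_zero, one_mul]

private lemma aux_mul {m : ℝ} (hm : 1 < m) (a : ℝ) :
    a * (|a| ^ (m - 2) * a) = |a| ^ m := by
  rcases eq_or_ne a 0 with rfl | ha
  · simp [Real.zero_rpow (show m ≠ 0 by intro h; linarith)]
  · have hpos : (0:ℝ) < |a| := abs_pos.2 ha
    have h2 : a * (|a| ^ (m - 2) * a) = |a| ^ (m - 2) * |a| ^ (2:ℝ) := by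
      rw [Real.rpow_two, sq_abs]; ring
    rw [h2, ← Real.rpow_add hpos]; norm_num


/-- for `m > 1`, `N ≥ 2`, under (H1), if a radial solution has an interior
critical point `r₀` with `u(r₀) > 0`, then `u(r) ≤ u(r₀)` for all `r ∈ (r₀, R)`. -/
theorem stmt9 (N : ℕ) (m b : ℝ) (f : ℝ → ℝ) (hm : 1 < m)
    (hN2 : 2 ≤ N) (hf : H1cond b f)
    (R : EReal) (u u' : ℝ → ℝ) (hu : IsRadialSolution N m f R u u')
    (r₀ : ℝ) (hr₀0 : 0 ≤ r₀) (hr₀R : (r₀ : EReal) < R)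
    (hc : u' r₀ = 0) (hpos : 0 < u r₀) :
    ∀ r : ℝ, r₀ < r → (r : EReal) < R → u r ≤ u r₀ := by
  obtain ⟨hR, hud, hu'c, hup, hu'0, hode, hulim, hu'lim⟩ := hu
  obtain ⟨hb, hfc, hf1, hf2⟩ := hf
  have hm0 : m ≠ 0 := by intro h; linarith
  have hm1 : m - 1 ≠ 0 := by intro h; linarith
  have hmdm : (0:ℝ) ≤ (m - 1) / m := div_nonneg (by linarith) (by linarith)
  have hN1 : (0:ℝ) < (N:ℝ) - 1 := by
    have : (2:ℝ) ≤ (N:ℝ) := by exact_mod_cast hN2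
    linarith
  -- neighborhoods inside the domain
  have hDnhds : ∀ r : ℝ, 0 < r → (r : EReal) < R → domR R ∈ 𝓝 r := by
    intro r hr hrR
    have hopen : IsOpen ((Ioi (0:ℝ)) ∩ Real.toEReal ⁻¹' (Iio R)) :=
      isOpen_Ioi.inter (isOpen_Iio.preimage continuous_coe_real_ereal)
    exact Filter.mem_of_superset (hopen.mem_nhds ⟨hr, hrR⟩)
      (fun x hx => ⟨le_of_lt hx.1, hx.2⟩)
  have hu_at : ∀ r : ℝ, 0 < r → (r : EReal) < R → HasDerivAt u (u' r) r := by
    intro r hr hrR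
    exact (hud r ⟨hr.le, hrR⟩).hasDerivAt (hDnhds r hr hrR)
  have hIccD : ∀ c ∈ domR R, Icc r₀ c ⊆ domR R := by
    intro c hc' r hr
    exact ⟨le_trans hr₀0 hr.1, lt_of_le_of_lt (EReal.coe_le_coe_iff.2 hr.2) hc'.2⟩
  -- the primitive F
  set F : ℝ → ℝ := fun t => ∫ x in b..t, f x with hF
  have hInt : ∀ s t : ℝ, 0 < s → 0 < t → IntervalIntegrable f volume s t := by
    intro s t hs ht
    apply ContinuousOn.intervalIntegrable (hfc.mono ?_)
    intro x hx
    rcases Set.mem_uIcc.mp hx with ⟨h1, _⟩ | ⟨h1, _⟩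
    · exact lt_of_lt_of_le hs h1
    · exact lt_of_lt_of_le ht h1
  have hFd : ∀ t : ℝ, 0 < t → HasDerivAt F (f t) t := by
    intro t ht
    exact intervalIntegral.integral_hasDerivAt_right (hInt b t hb ht)
      (hfc.stronglyMeasurableAtFilter isOpen_Ioi t ht)
      (hfc.continuousAt (isOpen_Ioi.mem_nhds ht))
  have hFdiff : ∀ s t : ℝ, 0 < s → 0 < t → F t - F s = ∫ x in s..t, f x := by
    intro s t hs ht
    have h := integral_add_adjacent_intervals (μ := volume) (hInt b s hb hs) (hInt s t hs ht)
    simp only [hF]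
    linarith [h]
  -- the energy
  set E : ℝ → ℝ := fun r => (m - 1) / m * |u' r| ^ m + F (u r) with hE
  have hE0 : E r₀ = F (u r₀) := by
    simp [hE, hc, Real.zero_rpow hm0]
  -- derivative of the energy
  have hEderiv : ∀ r : ℝ, 0 < r → (r : EReal) < R →
      HasDerivAt E (-(((N:ℝ) - 1) / r) * |u' r| ^ m) r := by
    intro r hr hrR
    have hx : r ≠ 0 := ne_of_gt hr
    set n := N - 1 with hn
    have hncast : (n:ℝ) = (N:ℝ) - 1 := by
      rw [hn, Nat.cast_sub (by omega : 1 ≤ N)]; norm_num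
    have hw := hode r hr hrR
    have hgpow : HasDerivAt (fun s : ℝ => s ^ n) ((n:ℝ) * r ^ (n - 1)) r := hasDerivAt_pow n r
    have hrn : r ^ n ≠ 0 := pow_ne_zero n hx
    have hg : HasDerivAt (fun s : ℝ => (s ^ n)⁻¹)
        (-((n:ℝ) * r ^ (n - 1)) / (r ^ n) ^ 2) r := hgpow.inv hrn
    set φ : ℝ → ℝ := fun s => |u' s| ^ (m - 2) * u' s with hφ
    have hsplit : r ^ n = r ^ (n - 1) * r := by
      conv_lhs => rw [show n = (n - 1) + 1 by omega]
      rw [pow_succ]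
    have hφd : HasDerivAt φ (-(f (u r)) - ((N:ℝ) - 1) / r * φ r) r := by
      have hmul := HasDerivAt.mul hw hg
      have heq : (fun s : ℝ => (s ^ n * |u' s| ^ (m - 2) * u' s) * (s ^ n)⁻¹) =ᶠ[𝓝 r] φ := by
        filter_upwards [eventually_ne_nhds hx] with s hs
        have hsn : s ^ n ≠ 0 := pow_ne_zero n hs
        field_simp [hφ]
        ring
      have h2 := hmul.congr_of_eventuallyEq heq.symm
      refine h2.congr_deriv ?_
      symm
      rw [← hncast, hφ]
      simp only []
      rw [hsplit]
      have hrn1 : r ^ (n - 1) ≠ 0 := pow_ne_zero _ hx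
      field_simp
      ring
    have hG : HasDerivAt (fun x : ℝ => |x| ^ (m / (m - 1)))
        ((m / (m - 1)) * |φ r| ^ (m / (m - 1) - 2) * φ r) (φ r) :=
      hasDerivAt_abs_rpow (φ r) (by rw [lt_div_iff₀ (by linarith : (0:ℝ) < m - 1)]; linarith)
    have hcomp := hG.comp r hφd
    have hFu : HasDerivAt (fun s => F (u s)) (f (u r) * u' r) r :=
      (hFd (u r) (hup r ⟨hr.le, hrR⟩)).comp r (hu_at r hr hrR)
    have hEd := (hcomp.const_mul ((m - 1) / m)).add hFu
    have hEeq : E = fun s => (m - 1) / m * ((fun x : ℝ => |x| ^ (m / (m - 1))) ∘ φ) s + F (u s) := by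
      funext s
      simp only [hE, Function.comp, hφ, aux_pow hm (u' s)]
    rw [hEeq]
    refine hEd.congr_deriv ?_
    symm
    have h2 : |φ r| ^ (m / (m - 1) - 2) * φ r = u' r := aux_inv hm (u' r)
    have h3 : u' r * φ r = |u' r| ^ m := aux_mul hm (u' r)
    have h4 : (m - 1) / m * (m / (m - 1)) = 1 := by field_simp
    calc -(((N:ℝ) - 1) / r) * |u' r| ^ m
        = -(((N:ℝ) - 1) / r) * (u' r * φ r) := by rw [h3]
      _ = ((m - 1) / m * (m / (m - 1))) *
            ((|φ r| ^ (m / (m - 1) - 2) * φ r) * (-(f (u r)) - ((N:ℝ) - 1) / r * φ r))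
            + f (u r) * u' r := by rw [h4, h2]; ring
      _ = (m - 1) / m * (m / (m - 1) * |φ r| ^ (m / (m - 1) - 2) * φ r *
            (-(f (u r)) - ((N:ℝ) - 1) / r * φ r)) + f (u r) * u' r := by ring
  -- E is antitone on [r₀, c]
  have hEcont : ContinuousOn E (domR R) := by
    apply ContinuousOn.add
    · apply ContinuousOn.mul continuousOn_const
      exact (hu'c.abs).rpow_const (fun x _ => Or.inr (by linarith : (0:ℝ) ≤ m))
    · intro x hx
      exact ((hFd (u x) (hup x hx)).continuousAt).comp_continuousWithinAt
        (hud x hx).continuousWithinAt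
  have hEanti : ∀ c ∈ domR R, AntitoneOn E (Icc r₀ c) := by
    intro c hc'
    have hsub := hIccD c hc'
    have hint : interior (Icc r₀ c) ⊆ {x : ℝ | 0 < x ∧ (x : EReal) < R} := by
      rw [interior_Icc]
      intro x hx
      exact ⟨lt_of_le_of_lt hr₀0 hx.1, lt_trans (EReal.coe_lt_coe_iff.2 hx.2) hc'.2⟩
    apply antitoneOn_of_deriv_nonpos (convex_Icc _ _) (hEcont.mono hsub)
    · intro x hx
      exact ((hEderiv x (hint hx).1 (hint hx).2).differentiableAt).differentiableWithinAt
    · intro x hx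
      rw [(hEderiv x (hint hx).1 (hint hx).2).deriv]
      have h1 : (0:ℝ) ≤ ((N:ℝ) - 1) / x := div_nonneg hN1.le (hint hx).1.le
      have h2 : (0:ℝ) ≤ |u' x| ^ m := Real.rpow_nonneg (abs_nonneg _) m
      nlinarith
  -- main argument
  intro r₂ hr₂ hr₂R
  by_contra hgt
  push_neg at hgt
  have hr₂D : r₂ ∈ domR R := ⟨le_trans hr₀0 hr₂.le, hr₂R⟩
  have hur₂pos := hup r₂ hr₂D
  have hmem0 : ∀ {c : ℝ}, r₀ ≤ c → r₀ ∈ Icc r₀ c := fun h => ⟨le_refl _, h⟩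
  rcases le_or_gt b (u r₀) with hbu | hub
  · -- Case A : u r₀ ≥ b
    have hEle : E r₂ ≤ E r₀ :=
      (hEanti r₂ hr₂D) (hmem0 hr₂.le) ⟨hr₂.le, le_refl _⟩ hr₂.le
    have h1 : F (u r₂) ≤ E r₂ := by
      have h2 : (0:ℝ) ≤ (m - 1) / m * |u' r₂| ^ m :=
        mul_nonneg hmdm (Real.rpow_nonneg (abs_nonneg _) m)
      simp only [hE]; linarith
    have h2 : 0 < ∫ x in (u r₀)..(u r₂), f x :=
      intervalIntegral_pos_of_pos_on (hInt _ _ hpos hur₂pos)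
        (fun x hx => hf2 x (lt_of_le_of_lt hbu hx.1)) hgt
    have h3 := hFdiff (u r₀) (u r₂) hpos hur₂pos
    rw [hE0] at hEle
    linarith
  · -- Case B : u r₀ < b
    obtain ⟨r₄, hr₄u, hr₄gt, hr₄R⟩ : ∃ r₄ : ℝ, u r₄ < u r₀ ∧ r₂ < r₄ ∧ (r₄ : EReal) < R := by
      have ev1 : ∀ᶠ r in limR R, u r < u r₀ := hulim.eventually_lt_const hpos
      have ev2 : ∀ᶠ r in limR R, r₂ < r ∧ (r : EReal) < R := by
        have hmem : (Ioi (r₂ : EReal) ∩ Iio R) ∈ 𝓝[Iio R] (R : EReal) :=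
          inter_mem (mem_nhdsWithin_of_mem_nhds (isOpen_Ioi.mem_nhds hr₂R)) self_mem_nhdsWithin
        have h5 : Real.toEReal ⁻¹' (Ioi (r₂ : EReal) ∩ Iio R) ∈ limR R :=
          Filter.preimage_mem_comap hmem
        filter_upwards [h5] with x hx
        exact ⟨EReal.coe_lt_coe_iff.1 hx.1, hx.2⟩
      have hall := ev1.and ev2
      rw [Filter.eventually_iff, limR, Filter.mem_comap] at hall
      obtain ⟨T, hT, hTsub⟩ := hall
      obtain ⟨V, hV, hVsub⟩ := mem_nhdsWithin_iff_exists_mem_nhds_inter.1 hT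
      obtain ⟨l, hlR, hIoc⟩ := exists_Ioc_subset_of_mem_nhds hV ⟨0, hR⟩
      obtain ⟨z, hz1, hz2⟩ := EReal.exists_between_coe_real hlR
      have hzT : (z : ℝ) ∈ Real.toEReal ⁻¹' T := hVsub ⟨hIoc ⟨hz1, hz2.le⟩, hz2⟩
      have hz := hTsub hzT
      exact ⟨z, hz.1, hz.2.1, hz.2.2⟩
    have hr₀r₄ : r₀ < r₄ := lt_trans hr₂ hr₄gt
    have hr₄D : r₄ ∈ domR R := ⟨le_trans hr₀0 hr₀r₄.le, hr₄R⟩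
    have hanti := hEanti r₄ hr₄D
    have hmem4 : r₄ ∈ Icc r₀ r₄ := ⟨hr₀r₄.le, le_refl _⟩
    have hE41 : E r₄ ≤ E r₀ := hanti (hmem0 hr₀r₄.le) hmem4 hr₀r₄.le
    have hu4pos : 0 < u r₄ := hup r₄ hr₄D
    have hFle : F (u r₀) ≤ F (u r₄) := by
      have h3 := hFdiff (u r₄) (u r₀) hu4pos hpos
      have h4 : (∫ x in (u r₄)..(u r₀), f x) ≤ 0 := by
        have h5 := intervalIntegral.integral_nonneg (f := fun x => -f x) (μ := volume)
          hr₄u.le (fun x hx => neg_nonneg.2 (hf1 x (lt_of_lt_of_le hu4pos hx.1)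
            (le_trans hx.2 hub.le)))
        rw [intervalIntegral.integral_neg] at h5
        linarith
      linarith
    have hE4F : F (u r₄) ≤ E r₄ := by
      have h2 : (0:ℝ) ≤ (m - 1) / m * |u' r₄| ^ m :=
        mul_nonneg hmdm (Real.rpow_nonneg (abs_nonneg _) m)
      simp only [hE]; linarith
    have hEeq : ∀ x ∈ Icc r₀ r₄, E x = E r₀ := by
      intro x hx
      have h5 : E x ≤ E r₀ := hanti (hmem0 hr₀r₄.le) hx hx.1
      have h6 : E r₄ ≤ E x := hanti hx hmem4 hx.2
      have h7 : E r₀ ≤ E r₄ := by rw [hE0]; linarith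
      linarith
    have hu'zero : ∀ x ∈ Ioo r₀ r₄, u' x = 0 := by
      intro x hx
      have hx0 : 0 < x := lt_of_le_of_lt hr₀0 hx.1
      have hxR : (x : EReal) < R := lt_trans (EReal.coe_lt_coe_iff.2 hx.2) hr₄R
      have hd := hEderiv x hx0 hxR
      have hconst : HasDerivAt E 0 x := by
        have heq : E =ᶠ[𝓝 x] fun _ => E r₀ := by
          filter_upwards [isOpen_Ioo.mem_nhds hx] with y hy
          exact hEeq y ⟨hy.1.le, hy.2.le⟩
        exact (hasDerivAt_const x (E r₀)).congr_of_eventuallyEq heq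
      have h0 : -(((N:ℝ) - 1) / x) * |u' x| ^ m = 0 := hd.unique hconst
      have habs : |u' x| = 0 := by
        by_contra hne
        have h8 : (0:ℝ) < |u' x| := lt_of_le_of_ne (abs_nonneg _) (Ne.symm hne)
        have h9 := Real.rpow_pos_of_pos h8 m
        have h10 : (0:ℝ) < ((N:ℝ) - 1) / x := div_pos hN1 hx0
        nlinarith
      exact abs_eq_zero.1 habs
    have huanti : AntitoneOn u (Icc r₀ r₄) := by
      apply antitoneOn_of_deriv_nonpos (convex_Icc _ _)
      · intro x hx
        exact ((hud x (hIccD r₄ hr₄D hx)).continuousWithinAt).mono (hIccD r₄ hr₄D)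
      · intro x hx
        rw [interior_Icc] at hx
        have hx0 : 0 < x := lt_of_le_of_lt hr₀0 hx.1
        have hxR : (x : EReal) < R := lt_trans (EReal.coe_lt_coe_iff.2 hx.2) hr₄R
        exact (hu_at x hx0 hxR).differentiableAt.differentiableWithinAt
      · intro x hx
        rw [interior_Icc] at hx
        have hx0 : 0 < x := lt_of_le_of_lt hr₀0 hx.1
        have hxR : (x : EReal) < R := lt_trans (EReal.coe_lt_coe_iff.2 hx.2) hr₄R
        rw [(hu_at x hx0 hxR).deriv, hu'zero x hx]
    have h11 : u r₂ ≤ u r₀ := huanti (hmem0 hr₀r₄.le) ⟨hr₂.le, hr₄gt.le⟩ hr₂.le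
    linarith


end
end
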